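/- arXiv:0904.2634 — 11 statements merged into one kernel-verified Lean document; each statement's English description precedes it below -/
import Mathlib

section
/- Let p, q, s be vectors in R^n with all entries positive, where p is (componentwise) nondecreasing and q is nonincreasing. If the vector s/q (componentwise division) is nondecreasing and non-constant, then ‖q‖²·(pᵀs) − (pᵀq)·(qᵀs) ≥ 0, with strict inequality if p is strictly increasing. -/
theorem lemma2_item1 (n : ℕ) (p q s : Fin n → ℝ)
    (hp : ∀ i, 0 < p i) (hq : ∀ i, 0 < q i) (hs : ∀ i, 0 < s i)
    (hpm : Monotone p) (hqm : Antitone q)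
    (hsq_mono : Monotone fun i => s i / q i)
    (hsq_nonconst : ∃ i j, s i / q i ≠ s j / q j) :
    (∑ i, q i ^ 2) * (∑ i, p i * s i) - (∑ i, p i * q i) * (∑ i, q i * s i) ≥ 0 ∧
      (StrictMono p →
        (∑ i, q i ^ 2) * (∑ i, p i * s i) - (∑ i, p i * q i) * (∑ i, q i * s i) > 0) := by
  set F : Fin n → Fin n → ℝ := fun i j =>
    q i * q j * (s j / q j - s i / q i) * (q i * p j - p i * q j) with hF
  have key : ∑ i, ∑ j, F i j =
      2 * ((∑ i, q i ^ 2) * (∑ i, p i * s i) - (∑ i, p i * q i) * (∑ i, q i * s i)) := by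
    have hterm : ∀ i j : Fin n, F i j =
        q i ^ 2 * (p j * s j) + q j ^ 2 * (p i * s i)
          - (p i * q i) * (q j * s j) - (p j * q j) * (q i * s i) := by
      intro i j
      have hqi := (hq i).ne'
      have hqj := (hq j).ne'
      simp only [hF]
      field_simp
      ring
    simp only [hterm, Finset.sum_add_distrib, Finset.sum_sub_distrib,
      ← Finset.mul_sum, ← Finset.sum_mul]
    ring
  have hnonneg : ∀ i j : Fin n, 0 ≤ F i j := by
    intro i j
    simp only [hF]
    rcases le_total i j with h | h
    · have h1 : 0 ≤ s j / q j - s i / q i := sub_nonneg.2 (hsq_mono h)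
      have h2 : 0 ≤ q i * p j - p i * q j := by
        have : p i * q j ≤ p j * q j := mul_le_mul_of_nonneg_right (hpm h) (hq j).le
        have : p j * q j ≤ p j * q i := mul_le_mul_of_nonneg_left (hqm h) (hp j).le
        nlinarith [mul_le_mul_of_nonneg_right (hpm h) (hq j).le]
      exact mul_nonneg (mul_nonneg (mul_pos (hq i) (hq j)).le h1) h2
    · have h1 : s j / q j - s i / q i ≤ 0 := sub_nonpos.2 (hsq_mono h)
      have h2 : q i * p j - p i * q j ≤ 0 := by
        have e1 : p j * q i ≤ p i * q i := mul_le_mul_of_nonneg_right (hpm h) (hq i).le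
        have e2 : p i * q i ≤ p i * q j := mul_le_mul_of_nonneg_left (hqm h) (hp i).le
        nlinarith
      exact mul_nonneg_of_nonpos_of_nonpos
        (mul_nonpos_of_nonneg_of_nonpos (mul_pos (hq i) (hq j)).le h1) h2
  have hsumnn : 0 ≤ ∑ i, ∑ j, F i j :=
    Finset.sum_nonneg fun i _ => Finset.sum_nonneg fun j _ => hnonneg i j
  constructor
  · linarith [key]
  · intro hps
    -- find a < b with s a / q a < s b / q b
    obtain ⟨i, j, hne⟩ := hsq_nonconst
    obtain ⟨a, b, hab, hrab⟩ : ∃ a b : Fin n, a < b ∧ s a / q a < s b / q b := by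
      rcases lt_trichotomy i j with h | h | h
      · exact ⟨i, j, h, lt_of_le_of_ne (hsq_mono h.le) hne⟩
      · exact absurd (by rw [h]) hne
      · exact ⟨j, i, h, lt_of_le_of_ne (hsq_mono h.le) (Ne.symm hne)⟩
    have hFab : 0 < F a b := by
      simp only [hF]
      have h2 : p a * q b < q a * p b := by
        have e1 : p a * q b < p b * q b := mul_lt_mul_of_pos_right (hps hab) (hq b)
        have e2 : p b * q b ≤ p b * q a := mul_le_mul_of_nonneg_left (hqm hab.le) (hp b).le
        nlinarith
      have h1 : 0 < s b / q b - s a / q a := sub_pos.2 hrab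
      have h2' : 0 < q a * p b - p a * q b := sub_pos.2 h2
      exact mul_pos (mul_pos (mul_pos (hq a) (hq b)) h1) h2'
    have hpos : 0 < ∑ i, ∑ j, F i j := by
      have h1 : 0 < ∑ j, F a j :=
        Finset.sum_pos' (fun j _ => hnonneg a j) ⟨b, Finset.mem_univ b, hFab⟩
      exact Finset.sum_pos' (fun i _ => Finset.sum_nonneg fun j _ => hnonneg i j)
        ⟨a, Finset.mem_univ a, h1⟩
    linarith [key]
end

section
/- Let p, q, s be vectors in R^n with all entries positive, where p is nondecreasing and q is nonincreasing. If the vector s/q (componentwise) is nonincreasing and non-constant, then ‖q‖²·(pᵀs) − (pᵀq)·(qᵀs) ≤ 0, with strict inequality if p is strictly increasing. -/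
lemma cheb_key (n : ℕ) (a f g : Fin n → ℝ) :
    2 * ((∑ i, a i) * (∑ i, a i * (f i * g i)) - (∑ i, a i * f i) * (∑ i, a i * g i))
      = ∑ i, ∑ j, a i * a j * (f i - f j) * (g i - g j) := by
  have h1 := Finset.sum_mul_sum Finset.univ Finset.univ a (fun i => a i * (f i * g i))
  have h2 := Finset.sum_mul_sum Finset.univ Finset.univ (fun i => a i * (f i * g i)) a
  have h3 := Finset.sum_mul_sum Finset.univ Finset.univ (fun i => a i * f i) (fun i => a i * g i)
  have h4 := Finset.sum_mul_sum Finset.univ Finset.univ (fun i => a i * g i) (fun i => a i * f i)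
  have e : 2 * ((∑ i, a i) * (∑ i, a i * (f i * g i)) - (∑ i, a i * f i) * (∑ i, a i * g i))
      = ((∑ i, a i) * (∑ i, a i * (f i * g i)) + (∑ i, a i * (f i * g i)) * (∑ i, a i))
        - ((∑ i, a i * f i) * (∑ i, a i * g i) + (∑ i, a i * g i) * (∑ i, a i * f i)) := by ring
  rw [e, h1, h2, h3, h4, ← Finset.sum_add_distrib, ← Finset.sum_add_distrib,
    ← Finset.sum_sub_distrib]
  refine Finset.sum_congr rfl fun i _ => ?_
  rw [← Finset.sum_add_distrib, ← Finset.sum_add_distrib, ← Finset.sum_sub_distrib]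
  exact Finset.sum_congr rfl fun j _ => by ring

theorem lemma2_item2 (n : ℕ) (p q s : Fin n → ℝ)
    (hp : ∀ i, 0 < p i) (hq : ∀ i, 0 < q i) (hs : ∀ i, 0 < s i)
    (hpm : Monotone p) (hqm : Antitone q)
    (hsq_anti : Antitone fun i => s i / q i)
    (hsq_nonconst : ∃ i j, s i / q i ≠ s j / q j) :
    (∑ i, q i ^ 2) * (∑ i, p i * s i) - (∑ i, p i * q i) * (∑ i, q i * s i) ≤ 0 ∧
      (StrictMono p →
        (∑ i, q i ^ 2) * (∑ i, p i * s i) - (∑ i, p i * q i) * (∑ i, q i * s i) < 0) := by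
  set a : Fin n → ℝ := fun i => q i ^ 2 with ha
  set f : Fin n → ℝ := fun i => p i / q i with hf
  set g : Fin n → ℝ := fun i => s i / q i with hg
  have hq0 : ∀ i, q i ≠ 0 := fun i => (hq i).ne'
  have r1 : ∀ i, p i * s i = a i * (f i * g i) := fun i => by
    simp only [ha, hf, hg]; field_simp [hq0 i]
  have r2 : ∀ i, p i * q i = a i * f i := fun i => by
    simp only [ha, hf]; field_simp [hq0 i]
  have r3 : ∀ i, q i * s i = a i * g i := fun i => by
    simp only [ha, hg]; field_simp [hq0 i]
  have hE : (∑ i, q i ^ 2) * (∑ i, p i * s i) - (∑ i, p i * q i) * (∑ i, q i * s i)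
      = (∑ i, a i) * (∑ i, a i * (f i * g i)) - (∑ i, a i * f i) * (∑ i, a i * g i) := by
    simp_rw [r1, r2, r3]; rfl
  have hfm : Monotone f := fun i j hij =>
    div_le_div₀ (hp j).le (hpm hij) (hq j) (hqm hij)
  -- each pair term is nonpositive
  have hterm : ∀ i j : Fin n, a i * a j * (f i - f j) * (g i - g j) ≤ 0 := by
    intro i j
    have haij : 0 ≤ a i * a j := mul_nonneg (sq_nonneg _) (sq_nonneg _)
    have hfg : (f i - f j) * (g i - g j) ≤ 0 := by
      rcases le_total i j with h | h
      · exact mul_nonpos_of_nonpos_of_nonneg (sub_nonpos.2 (hfm h))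
          (sub_nonneg.2 (hsq_anti h))
      · exact mul_nonpos_of_nonneg_of_nonpos (sub_nonneg.2 (hfm h))
          (sub_nonpos.2 (hsq_anti h))
    calc a i * a j * (f i - f j) * (g i - g j)
        = (a i * a j) * ((f i - f j) * (g i - g j)) := by ring
      _ ≤ 0 := mul_nonpos_of_nonneg_of_nonpos haij hfg
  have key := cheb_key n a f g
  constructor
  · rw [hE]
    nlinarith [key, Finset.sum_nonpos (fun i (_ : i ∈ Finset.univ) =>
      Finset.sum_nonpos (fun j (_ : j ∈ Finset.univ) => hterm i j))]
  · intro hps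
    -- strict term
    obtain ⟨i0, j0, hne⟩ := hsq_nonconst
    -- wlog i0 < j0 with g i0 > g j0
    have hlt : ∃ i j : Fin n, i < j ∧ g j < g i := by
      rcases lt_trichotomy i0 j0 with h | h | h
      · exact ⟨i0, j0, h, lt_of_le_of_ne (hsq_anti h.le) (Ne.symm hne)⟩
      · exact absurd (by rw [h]) hne
      · exact ⟨j0, i0, h, lt_of_le_of_ne (hsq_anti h.le) hne⟩
    obtain ⟨i1, j1, hij, hgij⟩ := hlt
    have hfij : f i1 < f j1 :=
      div_lt_div₀ (hps hij) (hqm hij.le) (hp j1).le (hq j1)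
    have hstrict : a i1 * a j1 * (f i1 - f j1) * (g i1 - g j1) < 0 := by
      have h1 : 0 < a i1 * a j1 := mul_pos (pow_pos (hq i1) 2) (pow_pos (hq j1) 2)
      have h2 : (f i1 - f j1) * (g i1 - g j1) < 0 :=
        mul_neg_of_neg_of_pos (sub_neg.2 hfij) (sub_pos.2 hgij)
      calc a i1 * a j1 * (f i1 - f j1) * (g i1 - g j1)
          = (a i1 * a j1) * ((f i1 - f j1) * (g i1 - g j1)) := by ring
        _ < 0 := mul_neg_of_pos_of_neg h1 h2
    have hsum_neg : (∑ i, ∑ j, a i * a j * (f i - f j) * (g i - g j)) < 0 := by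
      have houter : (∑ j, a i1 * a j * (f i1 - f j) * (g i1 - g j)) < 0 := by
        have := Finset.sum_lt_sum (f := fun j => a i1 * a j * (f i1 - f j) * (g i1 - g j))
          (g := fun _ => (0 : ℝ)) (fun j (_ : j ∈ Finset.univ) => hterm i1 j)
          ⟨j1, Finset.mem_univ j1, hstrict⟩
        simpa using this
      have := Finset.sum_lt_sum (f := fun i => ∑ j, a i * a j * (f i - f j) * (g i - g j))
        (g := fun _ => (0 : ℝ))
        (fun i (_ : i ∈ Finset.univ) =>
          Finset.sum_nonpos (fun j (_ : j ∈ Finset.univ) => hterm i j))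
        ⟨i1, Finset.mem_univ i1, houter⟩
      simpa using this
    rw [hE]
    nlinarith [key, hsum_neg]
end

section
/- Let p, q, s be vectors in R^n with all entries positive, where p is nondecreasing and q is nonincreasing. If the vector s/p (componentwise) is nonincreasing and non-constant, then ‖p‖²·(qᵀs) − (pᵀq)·(pᵀs) ≥ 0, with strict inequality if p is strictly increasing. -/
theorem lemma2_item4 (n : ℕ) (p q s : Fin n → ℝ)
    (hp : ∀ i, 0 < p i) (hq : ∀ i, 0 < q i) (hs : ∀ i, 0 < s i)
    (hpm : Monotone p) (hqm : Antitone q)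
    (hsp_anti : Antitone fun i => s i / p i)
    (hsp_nonconst : ∃ i j, s i / p i ≠ s j / p j) :
    (∑ i, p i ^ 2) * (∑ i, q i * s i) - (∑ i, p i * q i) * (∑ i, p i * s i) ≥ 0 ∧
      (StrictMono p →
        (∑ i, p i ^ 2) * (∑ i, q i * s i) - (∑ i, p i * q i) * (∑ i, p i * s i) > 0) := by
  set t : Fin n → Fin n → ℝ :=
    fun i j => (p i * s j - p j * s i) * (p i * q j - p j * q i) with ht
  have key : ∑ i, ∑ j, t i j
      = 2 * ((∑ i, p i ^ 2) * (∑ i, q i * s i) - (∑ i, p i * q i) * (∑ i, p i * s i)) := by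
    have e : ∀ i j : Fin n, t i j
        = p i ^ 2 * (q j * s j) + p j ^ 2 * (q i * s i)
          - (p i * q i) * (p j * s j) - (p j * q j) * (p i * s i) := by intros; simp [ht]; ring
    simp_rw [e, Finset.sum_sub_distrib, Finset.sum_add_distrib, ← Finset.sum_mul,
      ← Finset.mul_sum]
    rw [← Finset.sum_mul, ← Finset.sum_mul]; ring
  -- factor facts for i ≤ j
  have f1 : ∀ i j : Fin n, i ≤ j → p i * s j - p j * s i ≤ 0 := by
    intro i j hij
    have := hsp_anti hij
    simp only at this
    have := (div_le_div_iff₀ (hp j) (hp i)).mp this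
    nlinarith
  have f2 : ∀ i j : Fin n, i ≤ j → p i * q j - p j * q i ≤ 0 := by
    intro i j hij
    have h1 := hpm hij
    have h2 := hqm hij
    nlinarith [(hq j).le, (hp i).le]
  have tnn : ∀ i j : Fin n, 0 ≤ t i j := by
    intro i j
    rcases le_total i j with hij | hij
    · exact mul_nonneg_of_nonpos_of_nonpos (f1 i j hij) (f2 i j hij)
    · have : t i j = t j i := by simp [ht]; ring
      rw [this]
      exact mul_nonneg_of_nonpos_of_nonpos (f1 j i hij) (f2 j i hij)
  have hnn : (∑ i, p i ^ 2) * (∑ i, q i * s i) - (∑ i, p i * q i) * (∑ i, p i * s i) ≥ 0 := by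
    have : (0:ℝ) ≤ ∑ i, ∑ j, t i j :=
      Finset.sum_nonneg fun i _ => Finset.sum_nonneg fun j _ => tnn i j
    linarith [key ▸ this]
  refine ⟨hnn, fun hsm => ?_⟩
  -- find a witness pair i < j with s i / p i ≠ s j / p j
  obtain ⟨a, b, hab⟩ := hsp_nonconst
  have hane : a ≠ b := fun h => hab (h ▸ rfl)
  obtain ⟨i, j, hij, hne⟩ : ∃ i j : Fin n, i < j ∧ s i / p i ≠ s j / p j := by
    rcases lt_or_gt_of_ne hane with h | h
    · exact ⟨a, b, h, hab⟩
    · exact ⟨b, a, h, fun hh => hab hh.symm⟩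
  have hfac1 : p i * s j - p j * s i < 0 := by
    have hle := f1 i j hij.le
    have hne' : p i * s j ≠ p j * s i := by
      intro h
      apply hne
      rw [div_eq_div_iff (hp i).ne' (hp j).ne']
      linarith [h]
    cases lt_or_eq_of_le hle with
    | inl h => exact h
    | inr h => exact absurd (by linarith) hne'
  have hfac2 : p i * q j - p j * q i < 0 := by
    have h1 := hsm hij
    have h2 := hqm hij.le
    nlinarith [hq j, hp i, hq i]
  have htpos : 0 < t i j := mul_pos_of_neg_of_neg hfac1 hfac2
  have hspos : 0 < ∑ i, ∑ j, t i j := by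
    apply Finset.sum_pos' (fun i _ => Finset.sum_nonneg fun j _ => tnn i j)
    exact ⟨i, Finset.mem_univ i,
      Finset.sum_pos' (fun j _ => tnn i j) ⟨j, Finset.mem_univ j, htpos⟩⟩
  linarith [key ▸ hspos]
end

section
/- Let p, q, s ∈ R^n have positive entries, with p strictly increasing and q nonincreasing. If s is nonincreasing then ‖p‖²·(qᵀs) − (pᵀq)·(pᵀs) > 0, and if s is nondecreasing then ‖q‖²·(pᵀs) − (pᵀq)·(qᵀs) > 0. -/
lemma sum_mul_sub_aux (n : ℕ) (a b c d : Fin n → ℝ) :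
    (∑ i, a i) * (∑ i, b i) - (∑ i, c i) * (∑ i, d i)
    = ∑ i, ∑ j, (a i * b j - c i * d j) := by
  rw [Finset.sum_mul_sum, Finset.sum_mul_sum, ← Finset.sum_sub_distrib]
  exact Finset.sum_congr rfl fun i _ => (Finset.sum_sub_distrib ..).symm

lemma two_mul_double_aux (n : ℕ) (g : Fin n → Fin n → ℝ) :
    2 * (∑ i, ∑ j, g i j) = ∑ i, ∑ j, (g i j + g j i) := by
  simp only [Finset.sum_add_distrib]
  rw [Finset.sum_comm (f := fun i j => g j i)]
  ring

lemma double_sum_pos_aux (n : ℕ) (h : Fin n → Fin n → ℝ) (hnn : ∀ i j, 0 ≤ h i j)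
    (i0 j0 : Fin n) (hpos : 0 < h i0 j0) : 0 < ∑ i, ∑ j, h i j :=
  Finset.sum_pos' (fun i _ => Finset.sum_nonneg fun j _ => hnn i j)
    ⟨i0, Finset.mem_univ _, Finset.sum_pos' (fun j _ => hnn i0 j) ⟨j0, Finset.mem_univ _, hpos⟩⟩

theorem cor_ineq_monos (n : ℕ) (p q : Fin n → ℝ)
    (hp : ∀ i, 0 < p i) (hq : ∀ i, 0 < q i)
    (hpm : StrictMono p) (hqm : Antitone q) :
    (∀ s : Fin n → ℝ, (∀ i, 0 < s i) → Antitone s → (∃ i j, s i ≠ s j) →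
      (∑ i, p i ^ 2) * (∑ i, q i * s i) - (∑ i, p i * q i) * (∑ i, p i * s i) > 0) ∧
    (∀ s : Fin n → ℝ, (∀ i, 0 < s i) → Monotone s → (∃ i j, s i ≠ s j) →
      (∑ i, q i ^ 2) * (∑ i, p i * s i) - (∑ i, p i * q i) * (∑ i, q i * s i) > 0) := by
  constructor
  · intro s hs hsm hne
    obtain ⟨i0, j0, hij0⟩ := hne
    have hne' : i0 ≠ j0 := fun h => hij0 (by rw [h])
    set g : Fin n → Fin n → ℝ := fun i j =>
      p i ^ 2 * (q j * s j) - p i * q i * (p j * s j) with hg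
    have hkey : ∀ i j : Fin n, i < j → 0 < g i j + g j i := by
      intro i j hij
      have h1 : p i < p j := hpm hij
      have h2 : q j ≤ q i := hqm hij.le
      have h3 : s j ≤ s i := hsm hij.le
      have e : g i j + g j i
          = (p i * q j - p j * q i) * (p i * s j - p j * s i) := by
        simp only [hg]; ring
      rw [e]
      have f1 : p i * q j - p j * q i < 0 := by nlinarith [hq j, hp i]
      have f2 : p i * s j - p j * s i < 0 := by nlinarith [hs j, hp i]
      exact mul_pos_of_neg_of_neg f1 f2
    have hpos : ∀ i j : Fin n, i ≠ j → 0 < g i j + g j i := by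
      intro i j hij
      rcases lt_or_gt_of_ne hij with h' | h'
      · exact hkey i j h'
      · have := hkey j i h'; linarith
    have hnn : ∀ i j : Fin n, 0 ≤ g i j + g j i := by
      intro i j
      rcases eq_or_ne i j with rfl | hij
      · have : g i i + g i i = 0 := by simp only [hg]; ring
        linarith
      · exact (hpos i j hij).le
    have key : 2 * ((∑ i, p i ^ 2) * (∑ i, q i * s i)
        - (∑ i, p i * q i) * (∑ i, p i * s i)) = ∑ i, ∑ j, (g i j + g j i) := by
      rw [sum_mul_sub_aux n (fun i => p i ^ 2) (fun j => q j * s j)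
        (fun i => p i * q i) (fun j => p j * s j)]
      exact two_mul_double_aux n g
    have := double_sum_pos_aux n (fun i j => g i j + g j i) hnn i0 j0 (hpos i0 j0 hne')
    linarith
  · intro s hs hsm hne
    obtain ⟨i0, j0, hij0⟩ := hne
    have hne' : i0 ≠ j0 := fun h => hij0 (by rw [h])
    set g : Fin n → Fin n → ℝ := fun i j =>
      q i ^ 2 * (p j * s j) - p i * q i * (q j * s j) with hg
    have he : ∀ i j : Fin n, g i j + g j i
        = (q i * p j - q j * p i) * (q i * s j - q j * s i) := by
      intro i j; simp only [hg]; ring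
    have hkey : ∀ i j : Fin n, i < j → 0 ≤ g i j + g j i := by
      intro i j hij
      have h1 : p i < p j := hpm hij
      have h2 : q j ≤ q i := hqm hij.le
      have h3 : s i ≤ s j := hsm hij.le
      rw [he i j]
      have f1 : 0 < q i * p j - q j * p i := by nlinarith [hq j, hp j]
      have f2 : 0 ≤ q i * s j - q j * s i := by nlinarith [hs i, hq j]
      exact mul_nonneg f1.le f2
    have hnn : ∀ i j : Fin n, 0 ≤ g i j + g j i := by
      intro i j
      rcases lt_trichotomy i j with h' | rfl | h'
      · exact hkey i j h'
      · have : g i i + g i i = 0 := by simp only [hg]; ring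
        linarith
      · have := hkey j i h'; linarith
    have hkey2 : ∀ i j : Fin n, i < j → s i < s j → 0 < g i j + g j i := by
      intro i j hij hsij
      have h1 : p i < p j := hpm hij
      have h2 : q j ≤ q i := hqm hij.le
      rw [he i j]
      have f1 : 0 < q i * p j - q j * p i := by nlinarith [hq j, hp j]
      have f2 : 0 < q i * s j - q j * s i := by nlinarith [hs i, hq j, hq i]
      exact mul_pos f1 f2
    obtain ⟨i1, j1, hlt, hslt⟩ : ∃ i j : Fin n, i < j ∧ s i < s j := by
      rcases lt_or_gt_of_ne hne' with h' | h'
      · exact ⟨i0, j0, h', lt_of_le_of_ne (hsm h'.le) hij0⟩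
      · exact ⟨j0, i0, h', lt_of_le_of_ne (hsm h'.le) (Ne.symm hij0)⟩
    have key : 2 * ((∑ i, q i ^ 2) * (∑ i, p i * s i)
        - (∑ i, p i * q i) * (∑ i, q i * s i)) = ∑ i, ∑ j, (g i j + g j i) := by
      rw [sum_mul_sub_aux n (fun i => q i ^ 2) (fun j => p j * s j)
        (fun i => p i * q i) (fun j => q j * s j)]
      exact two_mul_double_aux n g
    have := double_sum_pos_aux n (fun i j => g i j + g j i) hnn i1 j1
      (hkey2 i1 j1 hlt hslt)
    linarith
end

section
/- Let p, q, r, s ∈ R^n have positive entries, with p strictly increasing and q nonincreasing, and suppose p·x* − s = r for a real number x*. Let (x̂, b̂) minimize ‖p·x − b·q − r‖² over (x, b) ∈ R². Then x̂ = x* + ((pᵀq)(qᵀs) − ‖q‖²(pᵀs)) / (‖p‖²‖q‖² − (pᵀq)²). Consequently, x̂ > x* if s/q is non-constant nonincreasing, x̂ < x* if s/q is non-constant nondecreasing, and x̂ = x* if s/q is constant. -/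
/-- Chebyshev/Lagrange-type double sum identity. -/
lemma lemma3_key (n : ℕ) (f g u v : Fin n → ℝ) :
    ∑ i, ∑ j, (f i * g j - f j * g i) * (u i * v j - u j * v i)
      = 2 * ((∑ i, f i * u i) * (∑ i, g i * v i) - (∑ i, f i * v i) * (∑ i, g i * u i)) := by
  simp_rw [show ∀ i j : Fin n, (f i * g j - f j * g i) * (u i * v j - u j * v i)
      = (f i * u i) * (g j * v j) - (f i * v i) * (g j * u j)
        - (g i * u i) * (f j * v j) + (g i * v i) * (f j * u j)
    from fun i j => by ring, Finset.sum_add_distrib, Finset.sum_sub_distrib,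
    ← Finset.mul_sum, ← Finset.sum_mul]
  ring

set_option maxHeartbeats 1000000 in
theorem lemma3_item1 (n : ℕ) (p q r s : Fin n → ℝ)
    (hp : ∀ i, 0 < p i) (hq : ∀ i, 0 < q i) (hr : ∀ i, 0 < r i) (hs : ∀ i, 0 < s i)
    (hpm : StrictMono p) (hqm : Antitone q)
    (hnotprop : ¬ ∃ c : ℝ, ∀ i, p i = c * q i)
    (xstar : ℝ) (hexact : ∀ i, p i * xstar - s i = r i)
    (xh bh : ℝ)
    (hmin : ∀ x b : ℝ,
      ∑ i, (xh * p i - bh * q i - r i) ^ 2 ≤ ∑ i, (x * p i - b * q i - r i) ^ 2) :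
    xh = xstar +
        ((∑ i, p i * q i) * (∑ i, q i * s i) - (∑ i, q i ^ 2) * (∑ i, p i * s i)) /
          ((∑ i, p i ^ 2) * (∑ i, q i ^ 2) - (∑ i, p i * q i) ^ 2) ∧
      ((Antitone (fun i => s i / q i) ∧ (∃ i j, s i / q i ≠ s j / q j)) → xh > xstar) ∧
      ((Monotone (fun i => s i / q i) ∧ (∃ i j, s i / q i ≠ s j / q j)) → xh < xstar) ∧
      ((∃ c : ℝ, ∀ i, s i / q i = c) → xh = xstar) := by
  have hn : 0 < n := by
    by_contra h
    exact hnotprop ⟨0, fun i => absurd i.pos (by omega)⟩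
  have hpp : (∑ i, p i * p i) = ∑ i, p i ^ 2 :=
    Finset.sum_congr rfl fun i _ => (sq (p i)).symm
  have hqq : (∑ i, q i * q i) = ∑ i, q i ^ 2 :=
    Finset.sum_congr rfl fun i _ => (sq (q i)).symm
  have hqp : (∑ i, q i * p i) = ∑ i, p i * q i :=
    Finset.sum_congr rfl fun i _ => mul_comm _ _
  -- cross terms with i < j are strictly negative for p,q
  have hcross : ∀ i j : Fin n, i < j → p i * q j - p j * q i < 0 := by
    intro i j hij
    have h1 : p i * q j < p j * q j :=
      mul_lt_mul_of_pos_right (hpm hij) (hq j)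
    have h2 : p j * q j ≤ p j * q i :=
      mul_le_mul_of_nonneg_left (hqm hij.le) (hp j).le
    linarith
  -- the denominator is positive
  have hne : ∃ i j : Fin n, p i * q j - p j * q i ≠ 0 := by
    by_contra h
    push_neg at h
    refine hnotprop ⟨p ⟨0, hn⟩ / q ⟨0, hn⟩, fun i => ?_⟩
    have h0 := h i ⟨0, hn⟩
    have hq0 := hq ⟨0, hn⟩
    field_simp
    linarith
  have hD : 0 < (∑ i, p i ^ 2) * (∑ i, q i ^ 2) - (∑ i, p i * q i) ^ 2 := by
    have hlag := lemma3_key n p q p q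
    rw [hpp, hqq, hqp] at hlag
    have hpos : 0 < ∑ i, ∑ j, (p i * q j - p j * q i) * (p i * q j - p j * q i) := by
      obtain ⟨i0, j0, hij⟩ := hne
      refine Finset.sum_pos' (fun i _ => Finset.sum_nonneg fun j _ => mul_self_nonneg _)
        ⟨i0, Finset.mem_univ _, Finset.sum_pos' (fun j _ => mul_self_nonneg _)
          ⟨j0, Finset.mem_univ _, mul_self_pos.mpr hij⟩⟩
    linarith [hlag, hpos]
  have hDne : ((∑ i, p i ^ 2) * (∑ i, q i ^ 2) - (∑ i, p i * q i) ^ 2) ≠ 0 := ne_of_gt hD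
  -- normal equations
  set E : Fin n → ℝ := fun i => xh * p i - bh * q i - r i with hE
  have normal : ∀ w : Fin n → ℝ, (∀ t : ℝ,
        ∑ i, (E i + t * w i) ^ 2 = ∑ i, (xh * p i - bh * q i - r i) ^ 2 +
          (2 * t * (∑ i, w i * E i) + t ^ 2 * ∑ i, w i ^ 2)) →
      (∀ t : ℝ, ∑ i, (xh * p i - bh * q i - r i) ^ 2 ≤ ∑ i, (E i + t * w i) ^ 2) →
      (0 < ∑ i, w i ^ 2) → ∑ i, w i * E i = 0 := by
    intro w hexp hle hw
    set A := ∑ i, w i ^ 2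
    set B := ∑ i, w i * E i
    have key : ∀ t : ℝ, 0 ≤ 2 * t * B + t ^ 2 * A := by
      intro t
      have h1 := hle t
      rw [hexp t] at h1
      linarith
    have h2 := key (-B / A)
    have h3 : (-B / A) * A = -B := div_mul_cancel₀ _ (ne_of_gt hw)
    nlinarith [sq_nonneg B, key (-B / A)]
  have hexp : ∀ (w : Fin n → ℝ) (t : ℝ),
      ∑ i, (E i + t * w i) ^ 2 = ∑ i, (xh * p i - bh * q i - r i) ^ 2 +
        (2 * t * (∑ i, w i * E i) + t ^ 2 * ∑ i, w i ^ 2) := by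
    intro w t
    simp_rw [Finset.mul_sum, ← Finset.sum_add_distrib]
    refine Finset.sum_congr rfl fun i _ => ?_
    simp only [hE]
    ring
  have eqp : ∑ i, p i * E i = 0 := by
    refine normal p (hexp p) (fun t => ?_) ?_
    · have h := hmin (xh + t) bh
      calc ∑ i, (xh * p i - bh * q i - r i) ^ 2
          ≤ ∑ i, ((xh + t) * p i - bh * q i - r i) ^ 2 := h
        _ = ∑ i, (E i + t * p i) ^ 2 := by
            refine Finset.sum_congr rfl fun i _ => ?_; simp only [hE]; ring
    · refine Finset.sum_pos' (fun i _ => sq_nonneg _) ⟨⟨0, hn⟩, Finset.mem_univ _,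
        pow_pos (hp _) 2⟩
  have eqq : ∑ i, q i * E i = 0 := by
    refine normal q (hexp q) (fun t => ?_) ?_
    · have h := hmin xh (bh - t)
      calc ∑ i, (xh * p i - bh * q i - r i) ^ 2
          ≤ ∑ i, (xh * p i - (bh - t) * q i - r i) ^ 2 := h
        _ = ∑ i, (E i + t * q i) ^ 2 := by
            refine Finset.sum_congr rfl fun i _ => ?_; simp only [hE]; ring
    · refine Finset.sum_pos' (fun i _ => sq_nonneg _) ⟨⟨0, hn⟩, Finset.mem_univ _,
        pow_pos (hq _) 2⟩
  -- expand normal equations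
  have hrexp : ∀ i, r i = p i * xstar - s i := fun i => (hexact i).symm
  have eqp' : xh * (∑ i, p i ^ 2) - bh * (∑ i, p i * q i)
      - (xstar * (∑ i, p i ^ 2) - ∑ i, p i * s i) = 0 := by
    rw [← eqp]
    simp_rw [Finset.mul_sum, ← Finset.sum_sub_distrib]
    refine Finset.sum_congr rfl fun i _ => ?_
    simp only [hE, hrexp i]
    ring
  have eqq' : xh * (∑ i, p i * q i) - bh * (∑ i, q i ^ 2)
      - (xstar * (∑ i, p i * q i) - ∑ i, q i * s i) = 0 := by
    rw [← eqq]
    simp_rw [Finset.mul_sum, ← Finset.sum_sub_distrib]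
    refine Finset.sum_congr rfl fun i _ => ?_
    simp only [hE, hrexp i]
    ring
  -- the main formula
  have hmain : xh = xstar +
      ((∑ i, p i * q i) * (∑ i, q i * s i) - (∑ i, q i ^ 2) * (∑ i, p i * s i)) /
        ((∑ i, p i ^ 2) * (∑ i, q i ^ 2) - (∑ i, p i * q i) ^ 2) := by
    rw [← sub_eq_iff_eq_add', eq_div_iff hDne]
    linear_combination (∑ i, q i ^ 2) * eqp' - (∑ i, p i * q i) * eqq'
  refine ⟨hmain, ?_, ?_, ?_⟩
  · rintro ⟨hanti, i0, j0, hne0⟩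
    have hnum : 0 < (∑ i, p i * q i) * (∑ i, q i * s i) -
        (∑ i, q i ^ 2) * (∑ i, p i * s i) := by
      have hid := lemma3_key n p q q s
      rw [hqq] at hid
      have tnonneg : ∀ i j : Fin n,
          0 ≤ (p i * q j - p j * q i) * (q i * s j - q j * s i) := by
        intro i j
        rcases lt_trichotomy i j with hij | hij | hij
        · have h1 := hcross i j hij
          have h2 : s j / q j ≤ s i / q i := hanti hij.le
          rw [div_le_div_iff₀ (hq j) (hq i)] at h2
          nlinarith
        · simp [hij]
        · have h1 := hcross j i hij
          have h2 : s i / q i ≤ s j / q j := hanti hij.le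
          rw [div_le_div_iff₀ (hq i) (hq j)] at h2
          nlinarith
      have hij0 : i0 ≠ j0 := fun hc => hne0 (by rw [hc])
      have hne2 : q i0 * s j0 - q j0 * s i0 ≠ 0 := by
        intro hc
        apply hne0
        rw [div_eq_div_iff (hq i0).ne' (hq j0).ne']
        linarith
      have tpos : 0 < (p i0 * q j0 - p j0 * q i0) * (q i0 * s j0 - q j0 * s i0) := by
        rcases lt_or_gt_of_ne hij0 with hij | hij
        · have h1 := hcross i0 j0 hij
          have h2 : s j0 / q j0 ≤ s i0 / q i0 := hanti hij.le
          rw [div_le_div_iff₀ (hq j0) (hq i0)] at h2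
          have h3 : q i0 * s j0 - q j0 * s i0 < 0 :=
            lt_of_le_of_ne (by linarith) hne2
          exact mul_pos_of_neg_of_neg h1 h3
        · have h1 := hcross j0 i0 hij
          have h2 : s i0 / q i0 ≤ s j0 / q j0 := hanti hij.le
          rw [div_le_div_iff₀ (hq i0) (hq j0)] at h2
          have h3 : 0 < q i0 * s j0 - q j0 * s i0 :=
            lt_of_le_of_ne (by linarith) (Ne.symm hne2)
          exact mul_pos (by linarith) h3
      have hpos : 0 < ∑ i, ∑ j, (p i * q j - p j * q i) * (q i * s j - q j * s i) := by
        refine Finset.sum_pos' (fun i _ => Finset.sum_nonneg fun j _ => tnonneg i j)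
          ⟨i0, Finset.mem_univ _, Finset.sum_pos' (fun j _ => tnonneg i0 j)
            ⟨j0, Finset.mem_univ _, tpos⟩⟩
      linarith [hid, hpos]
    rw [hmain]
    have := div_pos hnum hD
    linarith
  · rintro ⟨hmono, i0, j0, hne0⟩
    have hnum : (∑ i, p i * q i) * (∑ i, q i * s i) -
        (∑ i, q i ^ 2) * (∑ i, p i * s i) < 0 := by
      have hid := lemma3_key n p q q s
      rw [hqq] at hid
      have tnonpos : ∀ i j : Fin n,
          (p i * q j - p j * q i) * (q i * s j - q j * s i) ≤ 0 := by
        intro i j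
        rcases lt_trichotomy i j with hij | hij | hij
        · have h1 := hcross i j hij
          have h2 : s i / q i ≤ s j / q j := hmono hij.le
          rw [div_le_div_iff₀ (hq i) (hq j)] at h2
          nlinarith
        · simp [hij]
        · have h1 := hcross j i hij
          have h2 : s j / q j ≤ s i / q i := hmono hij.le
          rw [div_le_div_iff₀ (hq j) (hq i)] at h2
          nlinarith
      have hij0 : i0 ≠ j0 := fun hc => hne0 (by rw [hc])
      have hne2 : q i0 * s j0 - q j0 * s i0 ≠ 0 := by
        intro hc
        apply hne0
        rw [div_eq_div_iff (hq i0).ne' (hq j0).ne']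
        linarith
      have tneg : (p i0 * q j0 - p j0 * q i0) * (q i0 * s j0 - q j0 * s i0) < 0 := by
        rcases lt_or_gt_of_ne hij0 with hij | hij
        · have h1 := hcross i0 j0 hij
          have h2 : s i0 / q i0 ≤ s j0 / q j0 := hmono hij.le
          rw [div_le_div_iff₀ (hq i0) (hq j0)] at h2
          have h3 : 0 < q i0 * s j0 - q j0 * s i0 :=
            lt_of_le_of_ne (by linarith) (Ne.symm hne2)
          exact mul_neg_of_neg_of_pos h1 h3
        · have h1 := hcross j0 i0 hij
          have h2 : s j0 / q j0 ≤ s i0 / q i0 := hmono hij.le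
          rw [div_le_div_iff₀ (hq j0) (hq i0)] at h2
          have h3 : q i0 * s j0 - q j0 * s i0 < 0 :=
            lt_of_le_of_ne (by linarith) hne2
          exact mul_neg_of_pos_of_neg (by linarith) h3
      have hneg : ∑ i, ∑ j, (p i * q j - p j * q i) * (q i * s j - q j * s i) < 0 := by
        have hpos' : 0 < ∑ i, ∑ j,
            -((p i * q j - p j * q i) * (q i * s j - q j * s i)) := by
          refine Finset.sum_pos'
            (fun i _ => Finset.sum_nonneg fun j _ => by linarith [tnonpos i j])
            ⟨i0, Finset.mem_univ _, Finset.sum_pos'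
              (fun j _ => by linarith [tnonpos i0 j])
              ⟨j0, Finset.mem_univ _, by linarith [tneg]⟩⟩
        have hsum : ∑ i, ∑ j, -((p i * q j - p j * q i) * (q i * s j - q j * s i))
            = -∑ i, ∑ j, (p i * q j - p j * q i) * (q i * s j - q j * s i) := by
          simp [Finset.sum_neg_distrib]
        linarith [hpos', hsum]
      linarith [hid, hneg]
    rw [hmain]
    have := div_neg_of_neg_of_pos hnum hD
    linarith
  · rintro ⟨c, hc⟩
    have hsc : ∀ i, s i = c * q i := by
      intro i
      have h0 := hc i
      rw [div_eq_iff (hq i).ne'] at h0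
      linarith
    have h1 : (∑ i, q i * s i) = c * ∑ i, q i ^ 2 := by
      rw [Finset.mul_sum]
      exact Finset.sum_congr rfl fun i _ => by rw [hsc i]; ring
    have h2 : (∑ i, p i * s i) = c * ∑ i, p i * q i := by
      rw [Finset.mul_sum]
      exact Finset.sum_congr rfl fun i _ => by rw [hsc i]; ring
    rw [hmain, h1, h2]
    field_simp
    ring
end

section
/- Let p, q, r, s ∈ R^n have positive entries with p not proportional to q, and suppose p·x* − s = r. If (x̂, b̂) is the least squares minimizer of ‖p·x − b·q − r‖², then |x̂ − x*| ≤ (pᵀq)·‖q‖² / (‖p‖²‖q‖² − (pᵀq)²) · V(s/q), where V(v) = max_i v_i − min_i v_i. -/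
set_option maxHeartbeats 800000 in
theorem lemma3_item2 (n : ℕ) (hn : 0 < n) (p q r s : Fin n → ℝ)
    (hp : ∀ i, 0 < p i) (hq : ∀ i, 0 < q i) (hr : ∀ i, 0 < r i) (hs : ∀ i, 0 < s i)
    (hnotprop : ¬ ∃ c : ℝ, ∀ i, p i = c * q i)
    (xstar : ℝ) (hexact : ∀ i, p i * xstar - s i = r i)
    (xh bh : ℝ)
    (hmin : ∀ x b : ℝ,
      ∑ i, (xh * p i - bh * q i - r i) ^ 2 ≤ ∑ i, (x * p i - b * q i - r i) ^ 2) :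
    |xh - xstar| ≤
      (∑ i, p i * q i) * (∑ i, q i ^ 2) /
          ((∑ i, p i ^ 2) * (∑ i, q i ^ 2) - (∑ i, p i * q i) ^ 2) *
        (sSup (Set.range fun i => s i / q i) - sInf (Set.range fun i => s i / q i)) := by
  haveI : Nonempty (Fin n) := ⟨⟨0, hn⟩⟩
  set A := ∑ i, p i ^ 2 with hA_def
  set B := ∑ i, p i * q i with hB_def
  set C := ∑ i, q i ^ 2 with hC_def
  have hApos : 0 < A := Finset.sum_pos (fun i _ => pow_pos (hp i) 2) Finset.univ_nonempty
  have hBpos : 0 < B := Finset.sum_pos (fun i _ => mul_pos (hp i) (hq i)) Finset.univ_nonempty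
  have hCpos : 0 < C := Finset.sum_pos (fun i _ => pow_pos (hq i) 2) Finset.univ_nonempty
  -- normal equations
  have norm1 : ∑ i, p i * (xh * p i - bh * q i - r i) = 0 := by
    set G := ∑ i, p i * (xh * p i - bh * q i - r i) with hG_def
    have key : ∀ ε : ℝ, 0 ≤ 2 * ε * G + ε ^ 2 * A := by
      intro ε
      have h := hmin (xh + ε) bh
      have expand : ∑ i, ((xh + ε) * p i - bh * q i - r i) ^ 2
          = ∑ i, (xh * p i - bh * q i - r i) ^ 2 + (2 * ε * G + ε ^ 2 * A) := by
        rw [hG_def, hA_def, Finset.mul_sum, Finset.mul_sum, ← Finset.sum_add_distrib,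
          ← Finset.sum_add_distrib]
        exact Finset.sum_congr rfl fun i _ => by ring
      rw [expand] at h
      linarith
    have h1 := key (-G / A)
    have h2 : 2 * (-G / A) * G + (-G / A) ^ 2 * A = -(G ^ 2) / A := by
      field_simp; ring
    rw [h2] at h1
    have h3 : 0 ≤ -(G ^ 2) := by
      have := mul_nonneg h1 hApos.le
      rwa [div_mul_cancel₀ _ hApos.ne'] at this
    have h4 : G ^ 2 = 0 := le_antisymm (by linarith) (sq_nonneg G)
    exact pow_eq_zero_iff (two_ne_zero) |>.mp h4
  have norm2 : ∑ i, q i * (xh * p i - bh * q i - r i) = 0 := by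
    set G := ∑ i, q i * (xh * p i - bh * q i - r i) with hG_def
    have key : ∀ ε : ℝ, 0 ≤ -2 * ε * G + ε ^ 2 * C := by
      intro ε
      have h := hmin xh (bh + ε)
      have expand : ∑ i, (xh * p i - (bh + ε) * q i - r i) ^ 2
          = ∑ i, (xh * p i - bh * q i - r i) ^ 2 + (-2 * ε * G + ε ^ 2 * C) := by
        rw [hG_def, hC_def, Finset.mul_sum, Finset.mul_sum, ← Finset.sum_add_distrib,
          ← Finset.sum_add_distrib]
        exact Finset.sum_congr rfl fun i _ => by ring
      rw [expand] at h
      linarith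
    have h1 := key (G / C)
    have h2 : -2 * (G / C) * G + (G / C) ^ 2 * C = -(G ^ 2) / C := by
      field_simp; ring
    rw [h2] at h1
    have h3 : 0 ≤ -(G ^ 2) := by
      have := mul_nonneg h1 hCpos.le
      rwa [div_mul_cancel₀ _ hCpos.ne'] at this
    have h4 : G ^ 2 = 0 := le_antisymm (by linarith) (sq_nonneg G)
    exact pow_eq_zero_iff (two_ne_zero) |>.mp h4
  -- rewrite r via hexact
  have hrs : ∀ i, r i = p i * xstar - s i := fun i => (hexact i).symm
  set Ps := ∑ i, p i * s i with hPs_def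
  set Qs := ∑ i, q i * s i with hQs_def
  have eq1 : xh * A - bh * B - xstar * A + Ps = 0 := by
    rw [← norm1, hA_def, hB_def, hPs_def, Finset.mul_sum, Finset.mul_sum, Finset.mul_sum]
    rw [← Finset.sum_sub_distrib, ← Finset.sum_sub_distrib, ← Finset.sum_add_distrib]
    exact (Finset.sum_congr rfl fun i _ => by rw [hrs i]; ring).symm
  have eq2 : xh * B - bh * C - xstar * B + Qs = 0 := by
    rw [← norm2, hB_def, hC_def, hQs_def, Finset.mul_sum, Finset.mul_sum, Finset.mul_sum]
    rw [← Finset.sum_sub_distrib, ← Finset.sum_sub_distrib, ← Finset.sum_add_distrib]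
    exact (Finset.sum_congr rfl fun i _ => by rw [hrs i]; ring).symm
  have main : (A * C - B ^ 2) * (xh - xstar) = B * Qs - C * Ps := by nlinarith [eq1, eq2]
  -- strict Cauchy-Schwarz
  have hCS : B ^ 2 ≤ A * C := Finset.sum_mul_sq_le_sq_mul_sq Finset.univ p q
  have hD : 0 < A * C - B ^ 2 := by
    rcases lt_or_eq_of_le hCS with h | h
    · linarith
    · exfalso
      have hsum : ∑ i, (C * p i - B * q i) ^ 2 = 0 := by
        have expand : ∑ i, (C * p i - B * q i) ^ 2
            = C ^ 2 * A - 2 * C * B * B + B ^ 2 * C := by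
          rw [Finset.sum_congr rfl (fun i _ => by ring :
            ∀ i ∈ Finset.univ, (C * p i - B * q i) ^ 2
              = C ^ 2 * p i ^ 2 - 2 * C * B * (p i * q i) + B ^ 2 * q i ^ 2)]
          rw [Finset.sum_add_distrib, Finset.sum_sub_distrib, ← Finset.mul_sum,
            ← Finset.mul_sum, ← Finset.mul_sum, ← hA_def, ← hB_def, ← hC_def]
        rw [expand]; linear_combination (-C) * h
      have hzero : ∀ i ∈ Finset.univ, (C * p i - B * q i) ^ 2 = 0 := by
        intro i _
        exact (Finset.sum_eq_zero_iff_of_nonneg (fun i _ => sq_nonneg _)).mp hsum i (Finset.mem_univ i)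
      apply hnotprop
      refine ⟨B / C, fun i => ?_⟩
      have := hzero i (Finset.mem_univ i)
      have h5 : C * p i - B * q i = 0 := by
        have := pow_eq_zero_iff (two_ne_zero) |>.mp this
        exact this
      field_simp
      linarith
  -- sup/inf bounds
  set t := fun i => s i / q i with ht_def
  set M := sSup (Set.range t) with hM_def
  set m := sInf (Set.range t) with hm_def
  have hfin : (Set.range t).Finite := Set.finite_range t
  have htM : ∀ i, t i ≤ M := fun i => le_csSup hfin.bddAbove ⟨i, rfl⟩
  have htm : ∀ i, m ≤ t i := fun i => csInf_le hfin.bddBelow ⟨i, rfl⟩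
  have hst : ∀ i, s i = t i * q i := fun i =>
    (div_mul_cancel₀ (s i) (hq i).ne').symm
  -- weights
  set w := fun i => (B * q i - C * p i) * q i with hw_def
  have hwsum : ∑ i, w i = 0 := by
    rw [Finset.sum_congr rfl (fun i _ => by rw [hw_def]; ring :
      ∀ i ∈ Finset.univ, w i = B * q i ^ 2 - C * (p i * q i))]
    rw [Finset.sum_sub_distrib, ← Finset.mul_sum, ← Finset.mul_sum, ← hB_def, ← hC_def]
    ring
  have hnum : B * Qs - C * Ps = ∑ i, w i * t i := by
    rw [hw_def, hQs_def, hPs_def, Finset.mul_sum, Finset.mul_sum, ← Finset.sum_sub_distrib]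
    exact Finset.sum_congr rfl fun i _ => by rw [hst i]; ring
  have hshift : ∑ i, w i * t i = ∑ i, w i * (t i - m) := by
    simp only [mul_sub, Finset.sum_sub_distrib]
    rw [← Finset.sum_mul, hwsum]
    ring
  have hub : ∑ i, w i * (t i - m) ≤ B * C * (M - m) := by
    have : ∀ i ∈ Finset.univ, w i * (t i - m) ≤ B * q i ^ 2 * (M - m) := by
      intro i _
      rcases le_or_gt 0 (w i) with hwi | hwi
      · have h1 : w i * (t i - m) ≤ w i * (M - m) :=
          mul_le_mul_of_nonneg_left (by linarith [htM i, htm i]) hwi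
        have hwi' : w i = (B * q i - C * p i) * q i := rfl
        have h2 : w i ≤ B * q i ^ 2 := by
          rw [hwi']; nlinarith [mul_pos hCpos (mul_pos (hp i) (hq i))]
        have hMm : 0 ≤ M - m := by linarith [htm i, htM i]
        calc w i * (t i - m) ≤ w i * (M - m) := h1
        _ ≤ B * q i ^ 2 * (M - m) := mul_le_mul_of_nonneg_right h2 hMm
      · have h1 : w i * (t i - m) ≤ 0 := mul_nonpos_of_nonpos_of_nonneg hwi.le (by linarith [htm i])
        have h2 : 0 ≤ B * q i ^ 2 * (M - m) := by
          apply mul_nonneg (mul_nonneg hBpos.le (sq_nonneg _))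
          linarith [htm ⟨0, hn⟩, htM ⟨0, hn⟩]
        linarith
    calc ∑ i, w i * (t i - m) ≤ ∑ i, B * q i ^ 2 * (M - m) := Finset.sum_le_sum this
    _ = B * C * (M - m) := by
        rw [Finset.sum_congr rfl (fun i _ => by ring :
          ∀ i ∈ Finset.univ, B * q i ^ 2 * (M - m) = B * (M - m) * q i ^ 2),
          ← Finset.mul_sum, ← hC_def]
        ring
  have hlb : -(B * C * (M - m)) ≤ ∑ i, w i * (t i - m) := by
    have : ∀ i ∈ Finset.univ, -(C * (p i * q i) * (M - m)) ≤ w i * (t i - m) := by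
      intro i _
      rcases le_or_gt (w i) 0 with hwi | hwi
      · have h1 : w i * (M - m) ≤ w i * (t i - m) := by
          apply mul_le_mul_of_nonpos_left _ hwi
          linarith [htM i]
        have hwi' : w i = (B * q i - C * p i) * q i := rfl
        have h2 : -(C * (p i * q i)) ≤ w i := by
          rw [hwi']; nlinarith [mul_pos hBpos (mul_pos (hq i) (hq i))]
        have hMm : 0 ≤ M - m := by linarith [htm i, htM i]
        calc -(C * (p i * q i) * (M - m)) = -(C * (p i * q i)) * (M - m) := by ring
        _ ≤ w i * (M - m) := mul_le_mul_of_nonneg_right h2 hMm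
        _ ≤ w i * (t i - m) := h1
      · have h1 : 0 ≤ w i * (t i - m) := mul_nonneg hwi.le (by linarith [htm i])
        have h2 : 0 ≤ C * (p i * q i) * (M - m) := by
          apply mul_nonneg (mul_nonneg hCpos.le (mul_pos (hp i) (hq i)).le)
          linarith [htm ⟨0, hn⟩, htM ⟨0, hn⟩]
        linarith
    calc -(B * C * (M - m)) = ∑ i, -(C * (p i * q i) * (M - m)) := by
          rw [Finset.sum_congr rfl (fun i _ => by ring :
            ∀ i ∈ Finset.univ, -(C * (p i * q i) * (M - m)) = -(C * (M - m)) * (p i * q i)),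
            ← Finset.mul_sum, ← hB_def]
          ring
    _ ≤ ∑ i, w i * (t i - m) := Finset.sum_le_sum this
  -- conclude
  have habs : |(A * C - B ^ 2) * (xh - xstar)| ≤ B * C * (M - m) := by
    rw [main, hnum, hshift]
    exact abs_le.mpr ⟨hlb, hub⟩
  rw [abs_mul, abs_of_pos hD] at habs
  rw [div_mul_eq_mul_div, le_div_iff₀ hD]
  calc |xh - xstar| * (A * C - B ^ 2) = (A * C - B ^ 2) * |xh - xstar| := by ring
  _ ≤ B * C * (M - m) := habs
end

section
/- Let p, q, r, s ∈ R^n have positive entries, with p strictly increasing and q nonincreasing (p not proportional to q), and suppose p·x* − s = r. If (x̂, b̂) minimizes ‖p·x − b·q − r‖², then b̂ = (‖p‖²(qᵀs) − (pᵀq)(pᵀs)) / (‖p‖²‖q‖² − (pᵀq)²); hence b̂ > 0 if s/p is non-constant nonincreasing, b̂ < 0 if s/p is non-constant nondecreasing, and b̂ = 0 if s/p is constant. -/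
lemma quad_coeff_zero (a b : ℝ) (h : ∀ ε : ℝ, 0 ≤ a * ε ^ 2 + b * ε) : b = 0 := by
  by_contra hb
  have ha : (0:ℝ) < |a| + 1 := by positivity
  have h1 := h (-b / (|a| + 1))
  have haa : a ≤ |a| := le_abs_self a
  have hb2 : 0 < b ^ 2 := by positivity
  rw [div_pow, ← sub_nonneg] at h1
  have h2 : 0 ≤ (a * ((-b) ^ 2 / (|a| + 1) ^ 2) + b * (-b / (|a| + 1)) - 0) * (|a|+1)^2 :=
    mul_nonneg h1 (by positivity)
  have h3 : (a * ((-b) ^ 2 / (|a| + 1) ^ 2) + b * (-b / (|a| + 1)) - 0) * (|a|+1)^2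
      = b^2 * (a - (|a|+1)) := by field_simp; ring
  rw [h3] at h2
  nlinarith

lemma sum_sq_shift (n : ℕ) (u v : Fin n → ℝ) (c : ℝ) :
    ∑ i, (u i + c * v i) ^ 2 =
      ∑ i, (u i) ^ 2 + ((∑ i, (v i) ^ 2) * c ^ 2 + (2 * ∑ i, v i * u i) * c) := by
  rw [Finset.sum_mul, Finset.mul_sum, Finset.sum_mul, ← Finset.sum_add_distrib,
    ← Finset.sum_add_distrib]
  exact Finset.sum_congr rfl fun i _ => by ring

lemma double_symm (n : ℕ) (F : Fin n → Fin n → ℝ) :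
    2 * (∑ i, ∑ j, F i j) = ∑ i, ∑ j, (F i j + F j i) := by
  have h : ∑ i, ∑ j, F j i = ∑ i, ∑ j, F i j := Finset.sum_comm
  simp only [Finset.sum_add_distrib, h]
  ring

set_option maxHeartbeats 1000000 in
theorem lemma3_item3 (n : ℕ) (p q r s : Fin n → ℝ)
    (hp : ∀ i, 0 < p i) (hq : ∀ i, 0 < q i) (hr : ∀ i, 0 < r i) (hs : ∀ i, 0 < s i)
    (hpm : StrictMono p) (hqm : Antitone q)
    (hnotprop : ¬ ∃ c : ℝ, ∀ i, p i = c * q i)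
    (xstar : ℝ) (hexact : ∀ i, p i * xstar - s i = r i)
    (xh bh : ℝ)
    (hmin : ∀ x b : ℝ,
      ∑ i, (xh * p i - bh * q i - r i) ^ 2 ≤ ∑ i, (x * p i - b * q i - r i) ^ 2) :
    bh = ((∑ i, p i ^ 2) * (∑ i, q i * s i) - (∑ i, p i * q i) * (∑ i, p i * s i)) /
        ((∑ i, p i ^ 2) * (∑ i, q i ^ 2) - (∑ i, p i * q i) ^ 2) ∧
      ((Antitone (fun i => s i / p i) ∧ (∃ i j, s i / p i ≠ s j / p j)) → bh > 0) ∧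
      ((Monotone (fun i => s i / p i) ∧ (∃ i j, s i / p i ≠ s j / p j)) → bh < 0) ∧
      ((∃ c : ℝ, ∀ i, s i / p i = c) → bh = 0) := by
  -- n ≥ 2
  have hn2 : 1 < n := by
    by_contra h
    push_neg at h
    apply hnotprop
    interval_cases n
    · exact ⟨0, fun i => i.elim0⟩
    · refine ⟨p 0 / q 0, fun i => ?_⟩
      have hi : i = 0 := Subsingleton.elim i 0
      subst hi
      rw [div_mul_eq_mul_div, mul_div_assoc, div_self (hq 0).ne', mul_one]
  set i0 : Fin n := ⟨0, by omega⟩ with hi0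
  set i1 : Fin n := ⟨1, by omega⟩ with hi1
  have h01 : i0 < i1 := by simp [hi0, hi1, Fin.lt_def]
  -- pairwise inequalities
  have hpqs : ∀ i j : Fin n, i < j → p i * q j < q i * p j := by
    intro i j hij
    have h1 : p i < p j := hpm hij
    have h2 : q j ≤ q i := hqm hij.le
    nlinarith [hp i, hq j, hq i]
  have hpqle : ∀ i j : Fin n, i ≤ j → p i * q j ≤ q i * p j := by
    intro i j hij
    rcases eq_or_lt_of_le hij with h | h
    · subst h; rw [mul_comm]
    · exact (hpqs i j h).le
  set A := ∑ i, p i ^ 2 with hA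
  set B := ∑ i, p i * q i with hB
  set C := ∑ i, q i ^ 2 with hC
  set Sq := ∑ i, q i * s i with hSq
  set Sp := ∑ i, p i * s i with hSp
  -- positivity of determinant
  have hACB : A * C = ∑ i, ∑ j, p i ^ 2 * q j ^ 2 := by
    rw [hA, hC, Finset.sum_mul_sum]
  have hB2 : B ^ 2 = ∑ i, ∑ j, (p i * q i) * (p j * q j) := by
    rw [sq, hB, Finset.sum_mul_sum]
  have hDsum : 2 * (A * C - B ^ 2) = ∑ i, ∑ j, (p i * q j - q i * p j) ^ 2 := by
    have h1 : A * C - B ^ 2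
        = ∑ i, ∑ j, (p i ^ 2 * q j ^ 2 - (p i * q i) * (p j * q j)) := by
      rw [hACB, hB2, ← Finset.sum_sub_distrib]
      exact Finset.sum_congr rfl fun i _ => by rw [← Finset.sum_sub_distrib]
    rw [h1, double_symm]
    exact Finset.sum_congr rfl fun i _ => Finset.sum_congr rfl fun j _ => by ring
  have hD : 0 < A * C - B ^ 2 := by
    have hterm : 0 < (p i0 * q i1 - q i0 * p i1) ^ 2 := by
      have := hpqs i0 i1 h01
      nlinarith
    have hpos : 0 < ∑ i, ∑ j, (p i * q j - q i * p j) ^ 2 := by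
      refine Finset.sum_pos' (fun i _ => Finset.sum_nonneg fun j _ => sq_nonneg _)
        ⟨i0, Finset.mem_univ _, Finset.sum_pos' (fun j _ => sq_nonneg _)
          ⟨i1, Finset.mem_univ _, hterm⟩⟩
    rw [← hDsum] at hpos
    linarith
  -- normal equations
  have E1 : ∑ i, p i * (xh * p i - bh * q i - r i) = 0 := by
    have h2 : (2 : ℝ) * ∑ i, p i * (xh * p i - bh * q i - r i) = 0 := by
      apply quad_coeff_zero A
      intro ε
      have h := hmin (xh + ε) bh
      have hex : ∑ i, ((xh + ε) * p i - bh * q i - r i) ^ 2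
          = ∑ i, (xh * p i - bh * q i - r i) ^ 2
            + (A * ε ^ 2 + (2 * ∑ i, p i * (xh * p i - bh * q i - r i)) * ε) := by
        have := sum_sq_shift n (fun i => xh * p i - bh * q i - r i) p ε
        rw [← this]
        exact Finset.sum_congr rfl fun i _ => by ring_nf
      rw [hex] at h
      linarith
    linarith
  have E2 : ∑ i, q i * (xh * p i - bh * q i - r i) = 0 := by
    have h2 : (2 : ℝ) * ∑ i, (-q i) * (xh * p i - bh * q i - r i) = 0 := by
      apply quad_coeff_zero C
      intro ε
      have h := hmin xh (bh + ε)
      have hex : ∑ i, (xh * p i - (bh + ε) * q i - r i) ^ 2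
          = ∑ i, (xh * p i - bh * q i - r i) ^ 2
            + (C * ε ^ 2 + (2 * ∑ i, (-q i) * (xh * p i - bh * q i - r i)) * ε) := by
        have := sum_sq_shift n (fun i => xh * p i - bh * q i - r i) (fun i => -q i) ε
        rw [show C = ∑ i, (-q i) ^ 2 from Finset.sum_congr rfl fun i _ => by ring, ← this]
        exact Finset.sum_congr rfl fun i _ => by ring_nf
      rw [hex] at h
      linarith
    have h3 : ∑ i, (-q i) * (xh * p i - bh * q i - r i)
        = -∑ i, q i * (xh * p i - bh * q i - r i) := by
      rw [← Finset.sum_neg_distrib]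
      exact Finset.sum_congr rfl fun i _ => by ring
    rw [h3] at h2
    linarith
  -- scalar normal equations with r eliminated
  have hE1 : xh * A - bh * B - (xstar * A - Sp) = 0 := by
    rw [← E1, hA, hB, hSp, Finset.mul_sum, Finset.mul_sum, Finset.mul_sum,
      ← Finset.sum_sub_distrib, ← Finset.sum_sub_distrib, ← Finset.sum_sub_distrib]
    exact Finset.sum_congr rfl fun i _ => by rw [← hexact i]; ring
  have hE2 : xh * B - bh * C - (xstar * B - Sq) = 0 := by
    rw [← E2, hB, hC, hSq, Finset.mul_sum, Finset.mul_sum, Finset.mul_sum,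
      ← Finset.sum_sub_distrib, ← Finset.sum_sub_distrib, ← Finset.sum_sub_distrib]
    exact Finset.sum_congr rfl fun i _ => by rw [← hexact i]; ring
  have hbh : bh = (A * Sq - B * Sp) / (A * C - B ^ 2) := by
    rw [eq_div_iff hD.ne']
    linear_combination B * hE1 - A * hE2
  -- numerator symmetrization
  have hNsum : 2 * (A * Sq - B * Sp)
      = ∑ i, ∑ j, (p i * p j)
          * ((p i * q j - q i * p j) * (s j / p j - s i / p i)) := by
    have h1 : A * Sq = ∑ i, ∑ j, p i ^ 2 * (q j * s j) := by
      rw [hA, hSq, Finset.sum_mul_sum]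
    have h2 : B * Sp = ∑ i, ∑ j, (p i * q i) * (p j * s j) := by
      rw [hB, hSp, Finset.sum_mul_sum]
    have h3 : A * Sq - B * Sp
        = ∑ i, ∑ j, (p i ^ 2 * (q j * s j) - (p i * q i) * (p j * s j)) := by
      rw [h1, h2, ← Finset.sum_sub_distrib]
      exact Finset.sum_congr rfl fun i _ => by rw [← Finset.sum_sub_distrib]
    rw [h3, double_symm]
    refine Finset.sum_congr rfl fun i _ => Finset.sum_congr rfl fun j _ => ?_
    field_simp [(hp i).ne', (hp j).ne']
    ring
  refine ⟨hbh, ?_, ?_, ?_⟩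
  · rintro ⟨hant, i, j, hij⟩
    have hterm_nonneg : ∀ i j : Fin n,
        0 ≤ (p i * p j) * ((p i * q j - q i * p j) * (s j / p j - s i / p i)) := by
      intro i j
      rcases le_total i j with h | h
      · have h1 := hpqle i j h
        have h2 : s j / p j ≤ s i / p i := hant h
        have hX : p i * q j - q i * p j ≤ 0 := by linarith
        have hY : s j / p j - s i / p i ≤ 0 := by linarith
        have hXY : 0 ≤ (p i * q j - q i * p j) * (s j / p j - s i / p i) := by nlinarith
        exact mul_nonneg (mul_pos (hp i) (hp j)).le hXY
      · have h1 := hpqle j i h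
        have h2 : s i / p i ≤ s j / p j := hant h
        exact mul_nonneg (mul_pos (hp i) (hp j)).le
          (mul_nonneg (by linarith) (by linarith))
    have hkey : ∃ a b : Fin n,
        0 < (p a * p b) * ((p a * q b - q a * p b) * (s b / p b - s a / p a)) := by
      rcases lt_trichotomy i j with h | h | h
      · refine ⟨i, j, ?_⟩
        have h1 := hpqs i j h
        have h2 : s j / p j < s i / p i := lt_of_le_of_ne (hant h.le) (Ne.symm hij)
        exact mul_pos (mul_pos (hp i) (hp j))
          (mul_pos_of_neg_of_neg (by linarith) (by linarith))
      · exact absurd (h ▸ rfl) hij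
      · refine ⟨j, i, ?_⟩
        have h1 := hpqs j i h
        have h2 : s i / p i < s j / p j := lt_of_le_of_ne (hant h.le) hij
        exact mul_pos (mul_pos (hp j) (hp i))
          (mul_pos_of_neg_of_neg (by linarith) (by linarith))
    obtain ⟨a, b, hab⟩ := hkey
    have hNpos : 0 < ∑ i, ∑ j, (p i * p j)
        * ((p i * q j - q i * p j) * (s j / p j - s i / p i)) := by
      refine Finset.sum_pos' (fun i _ => Finset.sum_nonneg fun j _ => hterm_nonneg i j)
        ⟨a, Finset.mem_univ _, Finset.sum_pos' (fun j _ => hterm_nonneg a j)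
          ⟨b, Finset.mem_univ _, hab⟩⟩
    rw [← hNsum] at hNpos
    have hN : 0 < A * Sq - B * Sp := by linarith
    rw [hbh]
    exact div_pos hN hD
  · rintro ⟨hmon, i, j, hij⟩
    have hterm_nonpos : ∀ i j : Fin n,
        (p i * p j) * ((p i * q j - q i * p j) * (s j / p j - s i / p i)) ≤ 0 := by
      intro i j
      rcases le_total i j with h | h
      · have h1 := hpqle i j h
        have h2 : s i / p i ≤ s j / p j := hmon h
        exact mul_nonpos_of_nonneg_of_nonpos (mul_pos (hp i) (hp j)).le
          (mul_nonpos_of_nonpos_of_nonneg (by linarith) (by linarith))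
      · have h1 := hpqle j i h
        have h2 : s j / p j ≤ s i / p i := hmon h
        exact mul_nonpos_of_nonneg_of_nonpos (mul_pos (hp i) (hp j)).le
          (mul_nonpos_of_nonneg_of_nonpos (by linarith) (by linarith))
    have hkey : ∃ a b : Fin n,
        (p a * p b) * ((p a * q b - q a * p b) * (s b / p b - s a / p a)) < 0 := by
      rcases lt_trichotomy i j with h | h | h
      · refine ⟨i, j, ?_⟩
        have h1 := hpqs i j h
        have h2 : s i / p i < s j / p j := lt_of_le_of_ne (hmon h.le) hij
        exact mul_neg_of_pos_of_neg (mul_pos (hp i) (hp j))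
          (mul_neg_of_neg_of_pos (by linarith) (by linarith))
      · exact absurd (h ▸ rfl) hij
      · refine ⟨j, i, ?_⟩
        have h1 := hpqs j i h
        have h2 : s j / p j < s i / p i := lt_of_le_of_ne (hmon h.le) (Ne.symm hij)
        exact mul_neg_of_pos_of_neg (mul_pos (hp j) (hp i))
          (mul_neg_of_neg_of_pos (by linarith) (by linarith))
    obtain ⟨a, b, hab⟩ := hkey
    have hNpos : 0 < ∑ i, ∑ j, -((p i * p j)
        * ((p i * q j - q i * p j) * (s j / p j - s i / p i))) := by
      refine Finset.sum_pos'
        (fun i _ => Finset.sum_nonneg fun j _ => neg_nonneg.mpr (hterm_nonpos i j))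
        ⟨a, Finset.mem_univ _, Finset.sum_pos'
          (fun j _ => neg_nonneg.mpr (hterm_nonpos a j))
          ⟨b, Finset.mem_univ _, neg_pos.mpr hab⟩⟩
    have hflip : ∑ i, ∑ j, -((p i * p j)
        * ((p i * q j - q i * p j) * (s j / p j - s i / p i)))
        = -(∑ i, ∑ j, (p i * p j)
            * ((p i * q j - q i * p j) * (s j / p j - s i / p i))) := by
      rw [← Finset.sum_neg_distrib]
      exact Finset.sum_congr rfl fun i _ => by rw [← Finset.sum_neg_distrib]
    rw [hflip, neg_pos, ← sub_neg] at hNpos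
    rw [← hNsum] at hNpos
    have hN : A * Sq - B * Sp < 0 := by linarith
    rw [hbh]
    exact div_neg_of_neg_of_pos hN hD
  · rintro ⟨c, hc⟩
    have hsc : ∀ i, s i = c * p i := fun i => by
      have := hc i
      rw [div_eq_iff (hp i).ne'] at this
      linarith [this]
    have h1 : Sq = c * B := by
      rw [hSq, hB, Finset.mul_sum]
      exact Finset.sum_congr rfl fun i _ => by rw [hsc i]; ring
    have h2 : Sp = c * A := by
      rw [hSp, hA, Finset.mul_sum]
      exact Finset.sum_congr rfl fun i _ => by rw [hsc i]; ring
    rw [hbh, h1, h2]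
    ring
end

section
/- Let p̄, r̄, s̄ ∈ R^n have positive entries with p̄ strictly increasing and p̄·x* − s̄ = r̄ for a real x*. Let (x̂, b̂) minimize ‖p̄·x − b·e − r̄‖² where e = (1,...,1)ᵀ. Then x̂ = x* + (‖p̄‖₁·(∑ s̄_i) − n·(p̄ᵀs̄)) / (n‖p̄‖² − ‖p̄‖₁²). In particular x̂ > x* if s̄ is non-constant nonincreasing, x̂ < x* if s̄ is non-constant nondecreasing, and x̂ = x* if s̄ is constant. -/
lemma key_identity (n : ℕ) (a b : Fin n → ℝ) :
    (n : ℝ) * ∑ i, a i * b i - (∑ i, a i) * (∑ i, b i)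
      = (∑ i, ∑ j, (a i - a j) * (b i - b j)) / 2 := by
  have h : ∀ i j : Fin n, (a i - a j) * (b i - b j)
      = a i * b i + a j * b j - a i * b j - a j * b i := by intros; ring
  simp only [h, Finset.sum_sub_distrib, Finset.sum_add_distrib,
    Finset.sum_const, Finset.card_univ, Fintype.card_fin, nsmul_eq_mul,
    ← Finset.mul_sum, ← Finset.sum_mul]
  ring

lemma dsum_neg {n : ℕ} (f : Fin n → Fin n → ℝ) (hle : ∀ i j, f i j ≤ 0)
    (i0 j0 : Fin n) (hlt : f i0 j0 < 0) : ∑ i, ∑ j, f i j < 0 := by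
  have h1 : ∑ j, f i0 j < 0 := by
    have := Finset.sum_lt_sum (g := fun _ : Fin n => (0:ℝ))
      (fun j _ => hle i0 j) ⟨j0, Finset.mem_univ _, hlt⟩
    simpa using this
  have := Finset.sum_lt_sum (g := fun _ : Fin n => (0:ℝ))
    (s := Finset.univ)
    (fun i _ => Finset.sum_nonpos (fun j _ => hle i j))
    ⟨i0, Finset.mem_univ _, h1⟩
  -- this : ∑ i, ∑ j, f i j < ∑ i, 0
  simpa using this


lemma cheb_num_pos (n : ℕ) (p s : Fin n → ℝ) (hpm : StrictMono p)
    (hanti : Antitone s) (i j : Fin n) (hne : s i ≠ s j) :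
    0 < (∑ i, p i) * (∑ i, s i) - n * ∑ i, p i * s i := by
  have hkey := key_identity n p s
  have hle : ∀ a b : Fin n, (p a - p b) * (s a - s b) ≤ 0 := by
    intro a b
    rcases lt_trichotomy a b with h | h | h
    · nlinarith [hpm h, hanti h.le]
    · simp [h]
    · nlinarith [hpm h, hanti h.le]
  have hwit : ∃ a b : Fin n, (p a - p b) * (s a - s b) < 0 := by
    rcases lt_trichotomy i j with h | h | h
    · refine ⟨i, j, mul_neg_of_neg_of_pos (by linarith [hpm h]) ?_⟩
      rcases lt_or_eq_of_le (hanti h.le) with h2 | h2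
      · linarith
      · exact absurd h2.symm hne
    · exact absurd (h ▸ rfl) hne
    · refine ⟨j, i, mul_neg_of_neg_of_pos (by linarith [hpm h]) ?_⟩
      rcases lt_or_eq_of_le (hanti h.le) with h2 | h2
      · linarith
      · exact absurd h2 hne
  obtain ⟨a, b, hab⟩ := hwit
  have hsum : ∑ a, ∑ b, (p a - p b) * (s a - s b) < 0 :=
    dsum_neg _ hle a b hab
  nlinarith [hkey]

lemma cheb_num_neg (n : ℕ) (p s : Fin n → ℝ) (hpm : StrictMono p)
    (hmono : Monotone s) (i j : Fin n) (hne : s i ≠ s j) :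
    (∑ i, p i) * (∑ i, s i) - n * ∑ i, p i * s i < 0 := by
  have h := cheb_num_pos n p (fun k => -s k) hpm
    (fun a b hab => neg_le_neg (hmono hab)) i j (by simpa using hne)
  have e1 : ∑ k, (fun k => -s k) k = -∑ k, s k := by simp
  have e2 : ∑ k, p k * (fun k => -s k) k = -∑ k, p k * s k := by
    simp [mul_neg]
  rw [e1, e2] at h
  linarith

theorem cor_logan_item1 (n : ℕ) (hn : 2 ≤ n) (p r s : Fin n → ℝ)
    (hp : ∀ i, 0 < p i) (hr : ∀ i, 0 < r i) (hs : ∀ i, 0 < s i)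
    (hpm : StrictMono p)
    (xstar : ℝ) (hexact : ∀ i, p i * xstar - s i = r i)
    (xh bh : ℝ)
    (hmin : ∀ x b : ℝ,
      ∑ i, (xh * p i - bh - r i) ^ 2 ≤ ∑ i, (x * p i - b - r i) ^ 2) :
    xh = xstar +
        ((∑ i, p i) * (∑ i, s i) - n * ∑ i, p i * s i) /
          (n * ∑ i, p i ^ 2 - (∑ i, p i) ^ 2) ∧
      ((Antitone s ∧ (∃ i j, s i ≠ s j)) → xh > xstar) ∧
      ((Monotone s ∧ (∃ i j, s i ≠ s j)) → xh < xstar) ∧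
      ((∃ c : ℝ, ∀ i, s i = c) → xh = xstar) := by
  have hn0 : 0 < n := by omega
  have i0 : Fin n := ⟨0, hn0⟩
  have i1 : Fin n := ⟨1, by omega⟩
  -- denominator positivity
  have hDkey := key_identity n p p
  have hD : 0 < (n : ℝ) * ∑ i, p i ^ 2 - (∑ i, p i) ^ 2 := by
    have h01 : p ⟨0, hn0⟩ < p ⟨1, by omega⟩ := hpm (by simp [Fin.lt_def])
    have hneg : ∑ i, ∑ j, (-((p i - p j) * (p i - p j))) < 0 := by
      apply dsum_neg _ (fun i j => by nlinarith [sq_nonneg (p i - p j)])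
        ⟨0, hn0⟩ ⟨1, by omega⟩
      nlinarith
    have hpos : 0 < ∑ i, ∑ j, (p i - p j) * (p i - p j) := by
      have : ∑ i, ∑ j, (-((p i - p j) * (p i - p j)))
          = -∑ i, ∑ j, (p i - p j) * (p i - p j) := by
        simp [Finset.sum_neg_distrib]
      linarith [this ▸ hneg]
    have hsq : ∑ i, p i * p i = ∑ i, p i ^ 2 := by
      apply Finset.sum_congr rfl; intros; ring
    nlinarith [hDkey]
  have hDne : (n : ℝ) * ∑ i, p i ^ 2 - (∑ i, p i) ^ 2 ≠ 0 := ne_of_gt hD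
  -- normal equation 1 (derivative in x)
  have hA : 0 < ∑ i, p i ^ 2 :=
    Finset.sum_pos (fun i _ => pow_pos (hp i) 2) ⟨i0, Finset.mem_univ _⟩
  set A := ∑ i, p i ^ 2 with hAdef
  set B := ∑ i, p i * (xh * p i - bh - r i) with hBdef
  have hB : B = 0 := by
    have ht := hmin (xh + (-B / A)) bh
    set t := -B / A with htdef
    have hexp : ∑ i, ((xh + t) * p i - bh - r i) ^ 2
        = ∑ i, (xh * p i - bh - r i) ^ 2 + 2 * t * B + t ^ 2 * A := by
      rw [hBdef, hAdef, Finset.mul_sum, Finset.mul_sum, ← Finset.sum_add_distrib,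
        ← Finset.sum_add_distrib]
      apply Finset.sum_congr rfl; intros; ring
    rw [hexp] at ht
    have h1 : 0 ≤ 2 * t * B + t ^ 2 * A := by linarith
    have h2 : 2 * t * B + t ^ 2 * A = -B ^ 2 / A := by
      rw [htdef]; field_simp; ring
    have h3 : 0 ≤ -B ^ 2 / A := h2 ▸ h1
    have h4 : (0:ℝ) ≤ -B ^ 2 := by
      have := mul_nonneg h3 hA.le
      rwa [div_mul_cancel₀ _ (ne_of_gt hA)] at this
    have h5 : B ^ 2 = 0 := le_antisymm (by linarith) (sq_nonneg B)
    exact pow_eq_zero_iff (by norm_num) |>.mp h5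
  -- normal equation 2 (derivative in b)
  set C := ∑ i, (xh * p i - bh - r i) with hCdef
  have hC : C = 0 := by
    have ht := hmin xh (bh + (C / n))
    set t := C / n with htdef
    have hexp : ∑ i, (xh * p i - (bh + t) - r i) ^ 2
        = ∑ i, (xh * p i - bh - r i) ^ 2 - 2 * t * C + t ^ 2 * n := by
      rw [hCdef, Finset.mul_sum, ← Finset.sum_sub_distrib]
      rw [show (t:ℝ)^2 * n = ∑ _i : Fin n, t^2 by
        simp [Finset.sum_const, Finset.card_univ, mul_comm]]
      rw [← Finset.sum_add_distrib]
      apply Finset.sum_congr rfl; intros; ring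
    rw [hexp] at ht
    have hnpos : (0:ℝ) < n := by exact_mod_cast hn0
    have h1 : 0 ≤ -(2 * t * C) + t ^ 2 * n := by linarith
    have h2 : -(2 * t * C) + t ^ 2 * n = -C ^ 2 / n := by
      rw [htdef]; field_simp; ring
    have h3 : 0 ≤ -C ^ 2 / n := h2 ▸ h1
    have h4 : (0:ℝ) ≤ -C ^ 2 := by
      have := mul_nonneg h3 hnpos.le
      rwa [div_mul_cancel₀ _ (ne_of_gt hnpos)] at this
    have h5 : C ^ 2 = 0 := le_antisymm (by linarith) (sq_nonneg C)
    exact pow_eq_zero_iff (by norm_num) |>.mp h5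
  -- expand normal equations
  have hB' : xh * A - bh * (∑ i, p i) - ∑ i, p i * r i = 0 := by
    rw [← hB, hBdef, Finset.mul_sum, Finset.mul_sum, ← Finset.sum_sub_distrib,
      ← Finset.sum_sub_distrib]
    apply Finset.sum_congr rfl; intros; ring
  have hC' : xh * (∑ i, p i) - n * bh - ∑ i, r i = 0 := by
    rw [← hC, hCdef,
      show (∑ i, (xh * p i - bh - r i))
          = ∑ i, (xh * p i) - (∑ _i : Fin n, bh) - ∑ i, r i from by
        rw [← Finset.sum_sub_distrib, ← Finset.sum_sub_distrib]]
    simp [Finset.mul_sum, Finset.sum_const, Finset.card_univ, mul_comm]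
  -- substitute r = p * xstar - s
  have hpr : ∑ i, p i * r i = xstar * A - ∑ i, p i * s i := by
    rw [hAdef, Finset.mul_sum, ← Finset.sum_sub_distrib]
    apply Finset.sum_congr rfl; intro i _; rw [← hexact i]; ring
  have hrs : ∑ i, r i = xstar * (∑ i, p i) - ∑ i, s i := by
    rw [Finset.mul_sum, ← Finset.sum_sub_distrib]
    apply Finset.sum_congr rfl; intro i _; rw [← hexact i]; ring
  -- solve for xh
  have hmain : xh = xstar +
      ((∑ i, p i) * (∑ i, s i) - n * ∑ i, p i * s i) /
        (n * ∑ i, p i ^ 2 - (∑ i, p i) ^ 2) := by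
    rw [hpr] at hB'
    rw [hrs] at hC'
    have hx : xh * ((n:ℝ) * ∑ i, p i ^ 2 - (∑ i, p i) ^ 2)
        = xstar * ((n:ℝ) * ∑ i, p i ^ 2 - (∑ i, p i) ^ 2)
          + ((∑ i, p i) * (∑ i, s i) - (n:ℝ) * ∑ i, p i * s i) := by
      have hA' : A = ∑ i, p i ^ 2 := hAdef
      linear_combination (n:ℝ) * hB' - (∑ i, p i) * hC'
        + (xh - xstar) * (n:ℝ) * hA'
    have h6 : ((∑ i, p i) * (∑ i, s i) - (n:ℝ) * ∑ i, p i * s i) /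
        ((n:ℝ) * ∑ i, p i ^ 2 - (∑ i, p i) ^ 2) = xh - xstar := by
      rw [div_eq_iff (by rw [← hAdef]; exact hDne)]
      linear_combination -hx
    linarith [h6]
  refine ⟨hmain, ?_, ?_, ?_⟩
  · rintro ⟨hanti, i, j, hne⟩
    have hnum := cheb_num_pos n p s hpm hanti i j hne
    rw [hmain]
    have := div_pos hnum hD
    linarith
  · rintro ⟨hmono, i, j, hne⟩
    have hnum := cheb_num_neg n p s hpm hmono i j hne
    rw [hmain]
    have := div_neg_of_neg_of_pos hnum hD
    linarith
  · rintro ⟨c, hc⟩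
    have h1 : ∑ i, s i = n * c := by
      simp [hc, Finset.sum_const, Finset.card_univ, mul_comm]
    have h2 : ∑ i, p i * s i = c * ∑ i, p i := by
      rw [Finset.mul_sum]
      apply Finset.sum_congr rfl; intro i _; rw [hc i]; ring
    rw [hmain, h1, h2]
    field_simp
    ring
end

section
/- Let p̄, r̄, s̄ ∈ R^n have positive entries with p̄ non-constant, and suppose p̄·x* − s̄ = r̄. If (x̂, b̂) minimizes ‖p̄·x − b·e − r̄‖², then |x̂ − x*| ≤ n‖p̄‖₁ / (n‖p̄‖² − ‖p̄‖₁²) · V(s̄), where V(s̄) = max_i s̄_i − min_i s̄_i. -/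
private lemma key_lin (A B : ℝ) (hA : 0 < A) (h : ∀ t : ℝ, 0 ≤ A * t ^ 2 + B * t) :
    B = 0 := by
  have hA' : A ≠ 0 := ne_of_gt hA
  have e : A * (-(B / (2 * A))) ^ 2 + B * (-(B / (2 * A))) = -(B ^ 2) / (4 * A) := by
    field_simp; ring
  have h1 : (0:ℝ) ≤ -(B ^ 2) / (4 * A) := e ▸ h (-(B / (2 * A)))
  have h2 : (0:ℝ) ≤ -(B ^ 2) := by
    have h3 := mul_nonneg h1 (by linarith : (0:ℝ) ≤ 4 * A)
    rwa [div_mul_cancel₀ _ (by linarith : (4:ℝ) * A ≠ 0)] at h3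
  have h4 : B ^ 2 = 0 := le_antisymm (by linarith) (sq_nonneg B)
  exact pow_eq_zero_iff (two_ne_zero) |>.mp h4

theorem cor_logan_item1_bound (n : ℕ) (hn : 0 < n) (p r s : Fin n → ℝ)
    (hp : ∀ i, 0 < p i) (hr : ∀ i, 0 < r i) (hs : ∀ i, 0 < s i)
    (hpnonconst : ∃ i j, p i ≠ p j)
    (xstar : ℝ) (hexact : ∀ i, p i * xstar - s i = r i)
    (xh bh : ℝ)
    (hmin : ∀ x b : ℝ,
      ∑ i, (xh * p i - bh - r i) ^ 2 ≤ ∑ i, (x * p i - b - r i) ^ 2) :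
    |xh - xstar| ≤
      n * (∑ i, p i) / (n * ∑ i, p i ^ 2 - (∑ i, p i) ^ 2) *
        (sSup (Set.range s) - sInf (Set.range s)) := by
  set P1 := ∑ i, p i with hP1
  set P2 := ∑ i, p i ^ 2 with hP2
  have hP2pos : 0 < P2 :=
    Finset.sum_pos (fun i _ => pow_pos (hp i) 2) ⟨⟨0, hn⟩, Finset.mem_univ _⟩
  have hP1pos : 0 < P1 := Finset.sum_pos (fun i _ => (hp i)) ⟨⟨0, hn⟩, Finset.mem_univ _⟩
  have hnpos : (0:ℝ) < n := Nat.cast_pos.mpr hn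
  set D := (n:ℝ) * P2 - P1 ^ 2 with hD
  have hsq : ∑ i, ∑ j, (p i - p j) ^ 2 = 2 * D := by
    have inner : ∀ i : Fin n, ∑ j, (p i - p j) ^ 2
        = (n:ℝ) * p i ^ 2 - 2 * p i * P1 + P2 := by
      intro i
      have e : ∀ j : Fin n, (p i - p j) ^ 2
          = p i ^ 2 + ((-(2 * p i)) * p j + p j ^ 2) := fun j => by ring
      simp only [e, Finset.sum_add_distrib, ← Finset.mul_sum,
        Finset.sum_const, Finset.card_univ, Fintype.card_fin, nsmul_eq_mul, ← hP1, ← hP2]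
      ring
    have e2 : ∀ i : Fin n, (n:ℝ) * p i ^ 2 - 2 * p i * P1 + P2
        = (n:ℝ) * p i ^ 2 + ((-(2 * P1)) * p i + P2) := fun i => by ring
    simp only [inner, e2, Finset.sum_add_distrib, ← Finset.mul_sum,
      Finset.sum_const, Finset.card_univ, Fintype.card_fin, nsmul_eq_mul, ← hP1, ← hP2]
    ring
  have hDpos : 0 < D := by
    obtain ⟨i0, j0, hij⟩ := hpnonconst
    have hpos : 0 < ∑ i, ∑ j, (p i - p j) ^ 2 := by
      apply Finset.sum_pos' (fun i _ => Finset.sum_nonneg fun j _ => sq_nonneg _)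
      refine ⟨i0, Finset.mem_univ _, ?_⟩
      apply Finset.sum_pos' (fun j _ => sq_nonneg _)
      refine ⟨j0, Finset.mem_univ _, ?_⟩
      have hne : p i0 - p j0 ≠ 0 := sub_ne_zero.mpr hij
      positivity
    linarith [hsq ▸ hpos]
  -- normal equation 1
  have eq1 : ∑ i, p i * (xh * p i - bh - r i) = 0 := by
    have hk := key_lin P2 (2 * ∑ i, p i * (xh * p i - bh - r i)) hP2pos ?_
    · linarith
    intro t
    have h := hmin (xh + t) bh
    have expand : ∑ i, ((xh + t) * p i - bh - r i) ^ 2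
        = ∑ i, (xh * p i - bh - r i) ^ 2
          + (P2 * t ^ 2 + (2 * ∑ i, p i * (xh * p i - bh - r i)) * t) := by
      have e : ∀ i : Fin n, ((xh + t) * p i - bh - r i) ^ 2
          = (xh * p i - bh - r i) ^ 2
            + (p i ^ 2 * t ^ 2 + (2 * t) * (p i * (xh * p i - bh - r i))) := fun i => by ring
      simp only [e, Finset.sum_add_distrib, ← Finset.sum_mul, ← Finset.mul_sum, ← hP2]
      ring
    linarith [expand ▸ h]
  -- normal equation 2
  have eq2 : ∑ i, (xh * p i - bh - r i) = 0 := by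
    have hk := key_lin (n:ℝ) (-2 * ∑ i, (xh * p i - bh - r i)) hnpos ?_
    · linarith
    intro t
    have h := hmin xh (bh + t)
    have expand : ∑ i, (xh * p i - (bh + t) - r i) ^ 2
        = ∑ i, (xh * p i - bh - r i) ^ 2
          + ((n:ℝ) * t ^ 2 + (-2 * ∑ i, (xh * p i - bh - r i)) * t) := by
      have e : ∀ i : Fin n, (xh * p i - (bh + t) - r i) ^ 2
          = (xh * p i - bh - r i) ^ 2
            + (t ^ 2 + (-(2 * t)) * (xh * p i - bh - r i)) := fun i => by ring
      simp only [e, Finset.sum_add_distrib, ← Finset.mul_sum, Finset.sum_const,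
        Finset.card_univ, Fintype.card_fin, nsmul_eq_mul]
      ring
    linarith [expand ▸ h]
  set PS := ∑ i, p i * s i with hPS
  set S1 := ∑ i, s i with hS1
  have eq1' : xh * P2 - bh * P1 - (xstar * P2 - PS) = 0 := by
    have e : ∑ i, p i * (xh * p i - bh - r i)
        = xh * P2 - bh * P1 - (xstar * P2 - PS) := by
      have hri : ∀ i : Fin n, p i * (xh * p i - bh - r i)
          = xh * p i ^ 2 + ((-bh) * p i + ((-xstar) * p i ^ 2 + p i * s i)) := by
        intro i; rw [← hexact i]; ring
      simp only [hri, Finset.sum_add_distrib, ← Finset.mul_sum, ← hP1, ← hP2, ← hPS]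
      ring
    linarith [e ▸ eq1]
  have eq2' : xh * P1 - (n:ℝ) * bh - (xstar * P1 - S1) = 0 := by
    have e : ∑ i, (xh * p i - bh - r i)
        = xh * P1 - (n:ℝ) * bh - (xstar * P1 - S1) := by
      have hri : ∀ i : Fin n, (xh * p i - bh - r i)
          = xh * p i + (-bh + ((-xstar) * p i + s i)) := by
        intro i; rw [← hexact i]; ring
      simp only [hri, Finset.sum_add_distrib, ← Finset.mul_sum, Finset.sum_const,
        Finset.card_univ, Fintype.card_fin, nsmul_eq_mul, ← hP1, ← hS1]
      ring
    linarith [e ▸ eq2]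
  have key : (xh - xstar) * D = -((n:ℝ) * PS - P1 * S1) := by
    have h1 : (n:ℝ) * (xh * P2 - bh * P1 - (xstar * P2 - PS))
        - P1 * (xh * P1 - (n:ℝ) * bh - (xstar * P1 - S1)) = 0 := by
      rw [eq1', eq2']; ring
    rw [hD]; nlinarith [h1]
  set V := sSup (Set.range s) - sInf (Set.range s) with hV
  have hbdd : BddAbove (Set.range s) := (Set.finite_range s).bddAbove
  have hbddb : BddBelow (Set.range s) := (Set.finite_range s).bddBelow
  have habs : ∀ i j : Fin n, |s i - s j| ≤ V := by
    intro i j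
    have h1 : s i ≤ sSup (Set.range s) := le_csSup hbdd ⟨i, rfl⟩
    have h2 : sInf (Set.range s) ≤ s j := csInf_le hbddb ⟨j, rfl⟩
    have h3 : s j ≤ sSup (Set.range s) := le_csSup hbdd ⟨j, rfl⟩
    have h4 : sInf (Set.range s) ≤ s i := csInf_le hbddb ⟨i, rfl⟩
    rw [abs_sub_le_iff]
    constructor <;> · rw [hV]; linarith
  have hVnonneg : 0 ≤ V := le_trans (abs_nonneg _) (habs ⟨0, hn⟩ ⟨0, hn⟩)
  have hNbound : |(n:ℝ) * PS - P1 * S1| ≤ (n:ℝ) * P1 * V := by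
    have hrepr : (n:ℝ) * PS - P1 * S1 = ∑ i, ∑ j, p i * (s i - s j) := by
      have e : ∀ i : Fin n, ∑ j, p i * (s i - s j) = (n:ℝ) * (p i * s i) + (-(p i)) * S1 := by
        intro i
        have e2 : ∀ j : Fin n, p i * (s i - s j) = p i * s i + (-(p i)) * s j := fun j => by ring
        simp only [e2, Finset.sum_add_distrib, ← Finset.mul_sum, Finset.sum_const,
          Finset.card_univ, Fintype.card_fin, nsmul_eq_mul, ← hS1]
        ring
      simp only [e, Finset.sum_add_distrib, ← Finset.mul_sum]
      have e3 : ∀ i : Fin n, (-(p i)) * S1 = (-S1) * p i := fun i => by ring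
      simp only [e3, ← Finset.mul_sum, ← hP1, ← hPS]
      ring
    have hlast : ∑ i : Fin n, ∑ j : Fin n, p i * V = (n:ℝ) * P1 * V := by
      have e : ∀ i : Fin n, ∑ j : Fin n, p i * V = (n:ℝ) * (p i * V) := by
        intro i
        rw [Finset.sum_const, Finset.card_univ, Fintype.card_fin, nsmul_eq_mul]
      have e2 : ∀ i : Fin n, (n:ℝ) * (p i * V) = ((n:ℝ) * V) * p i := fun i => by ring
      simp only [e, e2, ← Finset.mul_sum, ← hP1]
      ring
    rw [hrepr]
    calc |∑ i, ∑ j, p i * (s i - s j)| ≤ ∑ i, |∑ j, p i * (s i - s j)| :=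
          Finset.abs_sum_le_sum_abs _ _
      _ ≤ ∑ i : Fin n, ∑ j : Fin n, |p i * (s i - s j)| :=
          Finset.sum_le_sum fun i _ => Finset.abs_sum_le_sum_abs _ _
      _ ≤ ∑ i : Fin n, ∑ j : Fin n, p i * V := by
          apply Finset.sum_le_sum; intro i _
          apply Finset.sum_le_sum; intro j _
          rw [abs_mul, abs_of_pos (hp i)]
          exact mul_le_mul_of_nonneg_left (habs i j) (le_of_lt (hp i))
      _ = (n:ℝ) * P1 * V := hlast
  have habsD : |xh - xstar| * D ≤ (n:ℝ) * P1 * V := by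
    have e : |xh - xstar| * D = |(n:ℝ) * PS - P1 * S1| := by
      rw [← abs_of_pos hDpos, ← abs_mul, key, abs_neg]
    linarith [e ▸ hNbound]
  rw [div_mul_eq_mul_div, le_div_iff₀ hDpos]
  exact habsD
end

section
/- Let p̄, r̄, s̄ ∈ R^n have positive entries with p̄ strictly increasing and p̄·x* − s̄ = r̄. Let (x̂, b̂) minimize ‖p̄·x − b·e − r̄‖². If s̄ is non-constant nonincreasing then b̂ > (∑ s̄_i)/n; if s̄ is non-constant nondecreasing then b̂ < (∑ s̄_i)/n; if s̄ is constant then b̂ = (∑ s̄_i)/n. -/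
open Finset

lemma quad_nonneg_zero {a b : ℝ} (ha : 0 < a) (h : ∀ t : ℝ, 0 ≤ a * t ^ 2 + b * t) :
    b = 0 := by
  have h1 := h (-(b / (2 * a)))
  have h2 : a * (-(b / (2 * a))) ^ 2 + b * (-(b / (2 * a))) = -(b ^ 2 / (4 * a)) := by
    field_simp
    ring
  rw [h2] at h1
  have h3 : b ^ 2 / (4 * a) ≤ 0 := by linarith
  have h4 : 0 < 4 * a := by linarith
  have h5 : b ^ 2 ≤ 0 := by
    by_contra hb
    push_neg at hb
    have : 0 < b ^ 2 / (4 * a) := div_pos hb h4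
    linarith
  have hb2 : b ^ 2 = 0 := le_antisymm h5 (sq_nonneg b)
  exact (pow_eq_zero_iff two_ne_zero).mp hb2

lemma double_sum_ident {n : ℕ} (f g : Fin n → ℝ) :
    ∑ i, ∑ j, (f i - f j) * (g i - g j)
      = 2 * ((n : ℝ) * ∑ i, f i * g i - (∑ i, f i) * (∑ i, g i)) := by
  have h : ∀ i j : Fin n, (f i - f j) * (g i - g j)
      = f i * g i - f i * g j - f j * g i + f j * g j := fun i j => by ring
  have A1 : ∑ i : Fin n, ∑ j : Fin n, f i * g i = (n : ℝ) * ∑ i, f i * g i := by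
    simp only [Finset.sum_const, Finset.card_univ, Fintype.card_fin, nsmul_eq_mul]
    rw [← Finset.mul_sum]
  have A2 : ∑ i : Fin n, ∑ j : Fin n, f i * g j = (∑ i, f i) * (∑ i, g i) :=
    (Finset.sum_mul_sum _ _ _ _).symm
  have A3 : ∑ i : Fin n, ∑ j : Fin n, f j * g i = (∑ i, f i) * (∑ i, g i) := by
    rw [Finset.sum_comm]
    exact (Finset.sum_mul_sum _ _ _ _).symm
  have A4 : ∑ i : Fin n, ∑ j : Fin n, f j * g j = (n : ℝ) * ∑ i, f i * g i := by
    rw [Finset.sum_const, Finset.card_univ, Fintype.card_fin, nsmul_eq_mul]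
  calc ∑ i, ∑ j, (f i - f j) * (g i - g j)
      = ∑ i : Fin n, ∑ j : Fin n, (f i * g i - f i * g j - f j * g i + f j * g j) := by
        simp_rw [h]
    _ = (∑ i : Fin n, ∑ j : Fin n, f i * g i) - (∑ i : Fin n, ∑ j : Fin n, f i * g j)
        - (∑ i : Fin n, ∑ j : Fin n, f j * g i) + (∑ i : Fin n, ∑ j : Fin n, f j * g j) := by
        simp_rw [Finset.sum_add_distrib, Finset.sum_sub_distrib]
    _ = 2 * ((n : ℝ) * ∑ i, f i * g i - (∑ i, f i) * (∑ i, g i)) := by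
        rw [A1, A2, A3, A4]; ring

lemma cheb_neg {n : ℕ} (p s : Fin n → ℝ) (hpm : StrictMono p) (hsa : Antitone s)
    (i j : Fin n) (hij : s i ≠ s j) :
    (n : ℝ) * ∑ k, p k * s k - (∑ k, p k) * (∑ k, s k) < 0 := by
  have term_nonpos : ∀ a b : Fin n, (p a - p b) * (s a - s b) ≤ 0 := by
    intro a b
    rcases lt_trichotomy a b with h | h | h
    · have h1 : p a < p b := hpm h
      have h2 : s b ≤ s a := hsa h.le
      nlinarith
    · simp [h]
    · have h1 : p b < p a := hpm h
      have h2 : s a ≤ s b := hsa h.le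
      nlinarith
  obtain ⟨a, b, hab⟩ : ∃ a b : Fin n, (p a - p b) * (s a - s b) < 0 := by
    rcases lt_trichotomy i j with h | h | h
    · refine ⟨i, j, ?_⟩
      have h1 : p i < p j := hpm h
      have h3 : s j < s i := lt_of_le_of_ne (hsa h.le) (Ne.symm hij)
      nlinarith
    · exact absurd (by rw [h]) hij
    · refine ⟨j, i, ?_⟩
      have h1 : p j < p i := hpm h
      have h3 : s i < s j := lt_of_le_of_ne (hsa h.le) hij
      nlinarith
  have hrow : ∑ j', (p a - p j') * (s a - s j') < 0 := by
    have h0 : ∑ j', (p a - p j') * (s a - s j') < ∑ _j' : Fin n, (0:ℝ) :=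
      Finset.sum_lt_sum (fun b' _ => term_nonpos a b') ⟨b, Finset.mem_univ _, hab⟩
    simpa using h0
  have houter : ∑ i', ∑ j', (p i' - p j') * (s i' - s j') < 0 := by
    have h0 : ∑ i', ∑ j', (p i' - p j') * (s i' - s j') < ∑ _i' : Fin n, (0:ℝ) :=
      Finset.sum_lt_sum
        (fun a' _ => Finset.sum_nonpos fun b' _ => term_nonpos a' b')
        ⟨a, Finset.mem_univ _, by simpa using hrow⟩
    simpa using h0
  rw [double_sum_ident] at houter
  linarith

lemma cheb_pos {n : ℕ} (p s : Fin n → ℝ) (hpm : StrictMono p) (hsm : Monotone s)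
    (i j : Fin n) (hij : s i ≠ s j) :
    0 < (n : ℝ) * ∑ k, p k * s k - (∑ k, p k) * (∑ k, s k) := by
  have hsa : Antitone (fun k => -s k) := fun a b hab => neg_le_neg (hsm hab)
  have hij' : -s i ≠ -s j := by simpa using hij
  have h := cheb_neg p (fun k => -s k) hpm hsa i j hij'
  have e1 : ∑ k, p k * -s k = -∑ k, p k * s k := by
    simp [mul_neg]
  have e2 : ∑ k : Fin n, -s k = -∑ k, s k := by simp
  rw [e1, e2] at h
  linarith

theorem cor_logan_item2 (n : ℕ) (hn : 2 ≤ n) (p r s : Fin n → ℝ)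
    (hp : ∀ i, 0 < p i) (hr : ∀ i, 0 < r i) (hs : ∀ i, 0 < s i)
    (hpm : StrictMono p)
    (xstar : ℝ) (hexact : ∀ i, p i * xstar - s i = r i)
    (xh bh : ℝ)
    (hmin : ∀ x b : ℝ,
      ∑ i, (xh * p i - bh - r i) ^ 2 ≤ ∑ i, (x * p i - b - r i) ^ 2) :
    ((Antitone s ∧ (∃ i j, s i ≠ s j)) → bh > (∑ i, s i) / n) ∧
      ((Monotone s ∧ (∃ i j, s i ≠ s j)) → bh < (∑ i, s i) / n) ∧
      ((∃ c : ℝ, ∀ i, s i = c) → bh = (∑ i, s i) / n) := by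
  have hn0 : (0:ℝ) < (n:ℝ) := by
    have : (0:ℕ) < n := by omega
    exact_mod_cast this
  set y : ℝ := xh - xstar with hy
  set P : ℝ := ∑ i, p i with hP
  set Q : ℝ := ∑ i, p i ^ 2 with hQ
  set S : ℝ := ∑ i, s i with hS
  set T : ℝ := ∑ i, p i * s i with hT
  have hci : ∀ i, xh * p i - bh - r i = y * p i - bh + s i := by
    intro i
    rw [← hexact i, hy]
    ring
  have hPpos : 0 < P := by
    rw [hP]
    exact Finset.sum_pos (fun i _ => hp i) ⟨⟨0, by omega⟩, Finset.mem_univ _⟩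
  have hQpos : 0 < Q := by
    rw [hQ]
    exact Finset.sum_pos (fun i _ => pow_pos (hp i) 2) ⟨⟨0, by omega⟩, Finset.mem_univ _⟩
  have hB : ∑ i, (y * p i - bh + s i) = y * P - (n:ℝ) * bh + S := by
    simp_rw [sub_eq_add_neg, Finset.sum_add_distrib, Finset.sum_const, Finset.card_univ,
      Fintype.card_fin, nsmul_eq_mul, ← Finset.mul_sum]
    rw [← hP, ← hS]
    ring
  -- first normal equation: perturb b
  have e1 : y * P - (n:ℝ) * bh + S = 0 := by
    have key : ∀ t : ℝ, 0 ≤ (n:ℝ) * t ^ 2 + (-2 * (y * P - (n:ℝ) * bh + S)) * t := by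
      intro t
      have h := hmin xh (bh + t)
      have expand : ∑ i, (xh * p i - (bh + t) - r i) ^ 2
          = ∑ i, (xh * p i - bh - r i) ^ 2
            + ((n:ℝ) * t ^ 2 + (-2 * (y * P - (n:ℝ) * bh + S)) * t) := by
        have h1 : ∀ i : Fin n, (xh * p i - (bh + t) - r i) ^ 2
            = (xh * p i - bh - r i) ^ 2 + (t ^ 2 - 2 * t * (y * p i - bh + s i)) := by
          intro i
          linear_combination (-2 * t) * hci i
        rw [Finset.sum_congr rfl (fun i _ => h1 i), Finset.sum_add_distrib]
        congr 1
        rw [Finset.sum_sub_distrib, ← Finset.mul_sum, hB, Finset.sum_const,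
          Finset.card_univ, Fintype.card_fin, nsmul_eq_mul]
        ring
      rw [expand] at h
      linarith
    have := quad_nonneg_zero hn0 key
    linarith
  -- second normal equation: perturb x
  have e2 : y * Q - bh * P + T = 0 := by
    have hA : ∑ i, p i * (y * p i - bh + s i) = y * Q - bh * P + T := by
      have hh : ∀ i : Fin n, p i * (y * p i - bh + s i)
          = y * p i ^ 2 + (-bh) * p i + p i * s i := fun i => by ring
      simp_rw [hh, Finset.sum_add_distrib, ← Finset.mul_sum]
      rw [← hP, ← hQ, ← hT]
      ring
    have key : ∀ t : ℝ, 0 ≤ Q * t ^ 2 + (2 * (y * Q - bh * P + T)) * t := by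
      intro t
      have h := hmin (xh + t) bh
      have expand : ∑ i, ((xh + t) * p i - bh - r i) ^ 2
          = ∑ i, (xh * p i - bh - r i) ^ 2
            + (Q * t ^ 2 + (2 * (y * Q - bh * P + T)) * t) := by
        have h1 : ∀ i : Fin n, ((xh + t) * p i - bh - r i) ^ 2
            = (xh * p i - bh - r i) ^ 2
              + (t ^ 2 * p i ^ 2 + 2 * t * (p i * (y * p i - bh + s i))) := by
          intro i
          linear_combination (2 * t * p i) * hci i
        rw [Finset.sum_congr rfl (fun i _ => h1 i), Finset.sum_add_distrib]
        congr 1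
        rw [Finset.sum_add_distrib, ← Finset.mul_sum, ← Finset.mul_sum, hA, ← hQ]
        ring
      rw [expand] at h
      linarith
    have := quad_nonneg_zero hQpos key
    linarith
  -- solve for bh
  have hb : bh * ((n:ℝ) * Q - P ^ 2) = Q * S - P * T := by
    linear_combination (-Q) * e1 + P * e2
  -- D > 0
  have hD : 0 < (n:ℝ) * Q - P ^ 2 := by
    have hij : p ⟨0, by omega⟩ ≠ p ⟨1, by omega⟩ :=
      ne_of_lt (hpm (by simp [Fin.lt_def]))
    have hd := cheb_pos p p hpm hpm.monotone ⟨0, by omega⟩ ⟨1, by omega⟩ hij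
    have h1 : ∑ k, p k * p k = Q := by
      rw [hQ]; congr 1; ext k; ring
    rw [h1, ← hP] at hd
    nlinarith [hd]
  have key : (bh * (n:ℝ) - S) * ((n:ℝ) * Q - P ^ 2) = P * (P * S - (n:ℝ) * T) := by
    linear_combination (n:ℝ) * hb
  refine ⟨?_, ?_, ?_⟩
  · rintro ⟨hsa, i, j, hij⟩
    have hK : (n:ℝ) * T - P * S < 0 := by
      have := cheb_neg p s hpm hsa i j hij
      rw [← hT, ← hP, ← hS] at this
      exact this
    rw [gt_iff_lt, div_lt_iff₀ hn0]
    by_contra hcon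
    push_neg at hcon
    nlinarith [key, mul_pos hPpos (show (0:ℝ) < P * S - (n:ℝ) * T by linarith),
      mul_nonneg (show (0:ℝ) ≤ S - bh * n by linarith) hD.le]
  · rintro ⟨hsm, i, j, hij⟩
    have hK' : 0 < (n:ℝ) * T - P * S := by
      have := cheb_pos p s hpm hsm i j hij
      rw [← hT, ← hP, ← hS] at this
      exact this
    rw [lt_div_iff₀ hn0]
    by_contra hcon
    push_neg at hcon
    nlinarith [key, mul_pos hPpos hK',
      mul_nonneg (show (0:ℝ) ≤ bh * n - S by linarith) hD.le]
  · rintro ⟨c, hc⟩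
    have hSc : S = (n:ℝ) * c := by
      rw [hS, Finset.sum_congr rfl (fun i _ => hc i)]
      simp [mul_comm]
    have hTc : T = P * c := by
      rw [hT, hP, Finset.sum_congr rfl (fun i _ => by rw [hc i]), ← Finset.sum_mul]
    have hz : P * S - (n:ℝ) * T = 0 := by rw [hSc, hTc]; ring
    rw [hz, mul_zero] at key
    have hzz : bh * (n:ℝ) - S = 0 := by
      rcases mul_eq_zero.mp key with h | h
      · exact h
      · linarith
    rw [eq_div_iff (ne_of_gt hn0)]
    linarith
end

section
/- For the two-tissue compartment ODE system dC₁/dt = K₁C_p − (k₂+k₃)C₁ + k₄C_S, dC_S/dt = k₃C₁ − k₄C_S with C₁(0) = C_S(0) = 0 and all rate constants positive, the total concentration C_T = C₁ + C_S satisfies the integral identity ∫₀ᵗ C_T(τ)dτ = DV·∫₀ᵗ C_p(τ)dτ − ((k₃+k₄)/(k₂k₄))·C_T(t) − (1/k₄)·C_S(t), where DV = (K₁/k₂)(1 + k₃/k₄). -/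
theorem two_tissue_integral_identity
    (K1 k2 k3 k4 : ℝ) (hK1 : 0 < K1) (hk2 : 0 < k2) (hk3 : 0 < k3) (hk4 : 0 < k4)
    (Cp C1 CS : ℝ → ℝ) (hCp : Continuous Cp)
    (hC1' : ∀ t, HasDerivAt C1 (K1 * Cp t - (k2 + k3) * C1 t + k4 * CS t) t)
    (hCS' : ∀ t, HasDerivAt CS (k3 * C1 t - k4 * CS t) t)
    (hC10 : C1 0 = 0) (hCS0 : CS 0 = 0) :
    ∀ t : ℝ,
      (∫ τ in (0 : ℝ)..t, (C1 τ + CS τ)) =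
        (K1 / k2) * (1 + k3 / k4) * (∫ τ in (0 : ℝ)..t, Cp τ) -
          ((k3 + k4) / (k2 * k4)) * (C1 t + CS t) - (1 / k4) * CS t := by
  have hC1c : Continuous C1 := by
    have : Differentiable ℝ C1 := fun t => (hC1' t).differentiableAt
    exact this.continuous
  have hCSc : Continuous CS := by
    have : Differentiable ℝ CS := fun t => (hCS' t).differentiableAt
    exact this.continuous
  have hcont1 : Continuous (fun τ => K1 * Cp τ - (k2 + k3) * C1 τ + k4 * CS τ) := by
    fun_prop
  have hcont2 : Continuous (fun τ => k3 * C1 τ - k4 * CS τ) := by fun_prop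
  intro t
  set A := ∫ τ in (0:ℝ)..t, C1 τ with hA
  set B := ∫ τ in (0:ℝ)..t, CS τ with hB
  set P := ∫ τ in (0:ℝ)..t, Cp τ with hP
  have h1 : K1 * P - (k2 + k3) * A + k4 * B = C1 t := by
    have hint : ∫ τ in (0:ℝ)..t, (K1 * Cp τ - (k2 + k3) * C1 τ + k4 * CS τ)
        = C1 t - C1 0 :=
      intervalIntegral.integral_eq_sub_of_hasDerivAt (fun τ _ => hC1' τ)
        (hcont1.intervalIntegrable 0 t)
    rw [hC10, sub_zero] at hint
    rw [← hint, intervalIntegral.integral_add, intervalIntegral.integral_sub,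
      intervalIntegral.integral_const_mul, intervalIntegral.integral_const_mul,
      intervalIntegral.integral_const_mul]
    · exact ((continuous_const.mul hCp)).intervalIntegrable _ _
    · exact ((continuous_const.mul hC1c)).intervalIntegrable _ _
    · exact (((continuous_const.mul hCp)).sub ((continuous_const.mul hC1c))).intervalIntegrable _ _
    · exact ((continuous_const.mul hCSc)).intervalIntegrable _ _
  have h2 : k3 * A - k4 * B = CS t := by
    have hint : ∫ τ in (0:ℝ)..t, (k3 * C1 τ - k4 * CS τ) = CS t - CS 0 :=
      intervalIntegral.integral_eq_sub_of_hasDerivAt (fun τ _ => hCS' τ)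
        (hcont2.intervalIntegrable 0 t)
    rw [hCS0, sub_zero] at hint
    rw [← hint, intervalIntegral.integral_sub, intervalIntegral.integral_const_mul,
      intervalIntegral.integral_const_mul]
    · exact ((continuous_const.mul hC1c)).intervalIntegrable _ _
    · exact ((continuous_const.mul hCSc)).intervalIntegrable _ _
  have hAB : ∫ τ in (0:ℝ)..t, (C1 τ + CS τ) = A + B :=
    intervalIntegral.integral_add (hC1c.intervalIntegrable _ _)
      (hCSc.intervalIntegrable _ _)
  rw [hAB]
  field_simp
  linear_combination (-(k4+k3)) * h1 + (-(k4+k3+k2)) * h2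
end
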